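/- arXiv:1307.6194 — 7 statements merged into one kernel-verified Lean document; each statement's English description precedes it below -/
import Mathlib

section
/- Multiplicative embedding X^r_{s,b} · X^r_{s−1,0} ↪ X^r_{s−1,0} in dimension n = 2, stated on the Fourier side: let 1<r≤2, b>1/r and s>1+1/r. Then there is a constant C such that for all measurable F, G : ℝ×ℝ² → [0,∞], ‖⟨ξ⟩^{s−1} (F∗G)(τ,ξ)‖_{L^{r'}(ℝ×ℝ², dτ dξ)} ≤ C ‖⟨ξ⟩^s ⟨|τ|−|ξ|⟩^b F(τ,ξ)‖_{L^{r'}} ‖⟨ξ⟩^{s−1} G(τ,ξ)‖_{L^{r'}}. -/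
open MeasureTheory ENNReal NNReal

lemma wkey {c a u v w : ℝ} (hc : 0 ≤ c) (hca : c ≤ a) (hu : 0 ≤ u) (hv : 0 ≤ v) (hw : 0 ≤ w)
    (huvw : u ≤ v + w) :
    (1 + u) ^ c * ((1 + v) ^ a)⁻¹ * ((1 + w) ^ c)⁻¹ ≤
      2 ^ c * (((1 + v) ^ a)⁻¹ + ((1 + w) ^ a)⁻¹) := by
  have hV : (0:ℝ) < 1 + v := by linarith
  have hW : (0:ℝ) < 1 + w := by linarith
  have hU : (0:ℝ) < 1 + u := by linarith
  rcases le_total v w with h | h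
  · have h1 : (1 + u) ^ c ≤ 2 ^ c * (1 + w) ^ c := by
      rw [← Real.mul_rpow (by norm_num) hW.le]
      exact Real.rpow_le_rpow hU.le (by linarith) hc
    calc (1 + u) ^ c * ((1 + v) ^ a)⁻¹ * ((1 + w) ^ c)⁻¹
        ≤ (2 ^ c * (1 + w) ^ c) * ((1 + v) ^ a)⁻¹ * ((1 + w) ^ c)⁻¹ := by gcongr
      _ = 2 ^ c * ((1 + v) ^ a)⁻¹ * ((1 + w) ^ c * ((1 + w) ^ c)⁻¹) := by ring
      _ = 2 ^ c * ((1 + v) ^ a)⁻¹ := by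
          rw [mul_inv_cancel₀ (by positivity), mul_one]
      _ ≤ 2 ^ c * (((1 + v) ^ a)⁻¹ + ((1 + w) ^ a)⁻¹) := by
          have : (0:ℝ) ≤ ((1 + w) ^ a)⁻¹ := by positivity
          have h2 : (0:ℝ) ≤ (2:ℝ) ^ c := by positivity
          nlinarith
  · have h1 : (1 + u) ^ c ≤ 2 ^ c * (1 + v) ^ c := by
      rw [← Real.mul_rpow (by norm_num) hV.le]
      exact Real.rpow_le_rpow hU.le (by linarith) hc
    have h3 : (1 + v) ^ c * ((1 + v) ^ a)⁻¹ ≤ (1 + w) ^ c * ((1 + w) ^ a)⁻¹ := by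
      have e1 : (1 + v) ^ c * ((1 + v) ^ a)⁻¹ = (1 + v) ^ (c - a) := by
        rw [Real.rpow_sub hV, div_eq_mul_inv]
      have e2 : (1 + w) ^ c * ((1 + w) ^ a)⁻¹ = (1 + w) ^ (c - a) := by
        rw [Real.rpow_sub hW, div_eq_mul_inv]
      rw [e1, e2]
      exact Real.rpow_le_rpow_of_nonpos hW (by linarith) (by linarith)
    calc (1 + u) ^ c * ((1 + v) ^ a)⁻¹ * ((1 + w) ^ c)⁻¹
        ≤ (2 ^ c * (1 + v) ^ c) * ((1 + v) ^ a)⁻¹ * ((1 + w) ^ c)⁻¹ := by gcongr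
      _ = 2 ^ c * ((1 + v) ^ c * ((1 + v) ^ a)⁻¹) * ((1 + w) ^ c)⁻¹ := by ring
      _ ≤ 2 ^ c * ((1 + w) ^ c * ((1 + w) ^ a)⁻¹) * ((1 + w) ^ c)⁻¹ := by
          gcongr
      _ = 2 ^ c * ((1 + w) ^ a)⁻¹ * ((1 + w) ^ c * ((1 + w) ^ c)⁻¹) := by ring
      _ = 2 ^ c * ((1 + w) ^ a)⁻¹ := by rw [mul_inv_cancel₀ (by positivity), mul_one]
      _ ≤ 2 ^ c * (((1 + v) ^ a)⁻¹ + ((1 + w) ^ a)⁻¹) := by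
          have : (0:ℝ) ≤ ((1 + v) ^ a)⁻¹ := by positivity
          have h2 : (0:ℝ) ≤ (2:ℝ) ^ c := by positivity
          nlinarith

lemma tkey {e α ρ : ℝ} :
    ((1 + |(|α|) - ρ|) ^ e)⁻¹ ≤ ((1 + |α - ρ|) ^ e)⁻¹ + ((1 + |α + ρ|) ^ e)⁻¹ := by
  rcases le_total 0 α with h | h
  · rw [abs_of_nonneg h]
    have : (0:ℝ) ≤ ((1 + |α + ρ|) ^ e)⁻¹ := by positivity
    linarith
  · rw [abs_of_nonpos h]
    have h2 : -α - ρ = -(α + ρ) := by ring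
    rw [h2, abs_neg]
    have : (0:ℝ) ≤ ((1 + |α - ρ|) ^ e)⁻¹ := by positivity
    linarith

lemma tint {e : ℝ} (ρ : ℝ) :
    (∫⁻ α : ℝ, ENNReal.ofReal (((1 + |(|α|) - ρ|) ^ e)⁻¹)) ≤
      2 * ∫⁻ α : ℝ, ENNReal.ofReal ((1 + ‖α‖) ^ (-e)) := by
  have hnorm : ∀ x : ℝ, ENNReal.ofReal ((1 + ‖x‖) ^ (-e)) =
      ENNReal.ofReal (((1 + |x|) ^ e)⁻¹) := by
    intro x; rw [Real.norm_eq_abs, Real.rpow_neg (by positivity)]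
  have hmeas : Measurable fun α : ℝ => ENNReal.ofReal (((1 + |α - ρ|) ^ e)⁻¹) := by fun_prop
  calc ∫⁻ α : ℝ, ENNReal.ofReal (((1 + |(|α|) - ρ|) ^ e)⁻¹)
      ≤ ∫⁻ α : ℝ, (ENNReal.ofReal (((1 + |α - ρ|) ^ e)⁻¹)
          + ENNReal.ofReal (((1 + |α + ρ|) ^ e)⁻¹)) := by
        refine lintegral_mono fun α => ?_
        exact le_trans (ENNReal.ofReal_le_ofReal tkey) ENNReal.ofReal_add_le
    _ = (∫⁻ α : ℝ, ENNReal.ofReal (((1 + |α - ρ|) ^ e)⁻¹))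
          + ∫⁻ α : ℝ, ENNReal.ofReal (((1 + |α + ρ|) ^ e)⁻¹) := lintegral_add_left hmeas _
    _ = (∫⁻ α : ℝ, ENNReal.ofReal ((1 + ‖α‖) ^ (-e)))
          + ∫⁻ α : ℝ, ENNReal.ofReal ((1 + ‖α‖) ^ (-e)) := by
        congr 1
        · calc (∫⁻ α : ℝ, ENNReal.ofReal (((1 + |α - ρ|) ^ e)⁻¹))
              = ∫⁻ α : ℝ, (fun x : ℝ => ENNReal.ofReal ((1 + ‖x‖) ^ (-e))) (α - ρ) := by
                exact lintegral_congr fun α => (hnorm _).symm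
            _ = _ := lintegral_sub_right_eq_self (fun x : ℝ => ENNReal.ofReal ((1 + ‖x‖) ^ (-e))) ρ
        · calc (∫⁻ α : ℝ, ENNReal.ofReal (((1 + |α + ρ|) ^ e)⁻¹))
              = ∫⁻ α : ℝ, (fun x : ℝ => ENNReal.ofReal ((1 + ‖x‖) ^ (-e))) (α - (-ρ)) := by
                exact lintegral_congr fun α => by rw [← hnorm, sub_neg_eq_add]
            _ = _ := lintegral_sub_right_eq_self (fun x : ℝ => ENNReal.ofReal ((1 + ‖x‖) ^ (-e))) (-ρ)
    _ = 2 * ∫⁻ α : ℝ, ENNReal.ofReal ((1 + ‖α‖) ^ (-e)) := (two_mul _).symm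

lemma mker {r b s c a e : ℝ} (hr0 : 0 < r) (hs1 : 1 ≤ s)
    (hc : c = (s - 1) * r) (ha : a = s * r) (he : e = b * r)
    {u v w l : ℝ} (hu : 0 ≤ u) (hv : 0 ≤ v) (hw : 0 ≤ w) (hl : 0 ≤ l) (huvw : u ≤ v + w) :
    ((1 + u) ^ (s - 1) * ((1 + v) ^ s * (1 + l) ^ b)⁻¹ * ((1 + w) ^ (s - 1))⁻¹) ^ r ≤
      (2 ^ c * (((1 + v) ^ a)⁻¹ + ((1 + w) ^ a)⁻¹)) * ((1 + l) ^ e)⁻¹ := by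
  have h1 : ∀ x : ℝ, 0 ≤ x → ∀ y : ℝ, ((1 + x) ^ y) ^ r = (1 + x) ^ (y * r) := fun x hx y =>
    (Real.rpow_mul (by linarith) y r).symm
  have heq : ((1 + u) ^ (s - 1) * ((1 + v) ^ s * (1 + l) ^ b)⁻¹ * ((1 + w) ^ (s - 1))⁻¹) ^ r =
      ((1 + u) ^ c * ((1 + v) ^ a)⁻¹ * ((1 + w) ^ c)⁻¹) * ((1 + l) ^ e)⁻¹ := by
    rw [Real.mul_rpow (by positivity) (by positivity),
      Real.mul_rpow (by positivity) (by positivity),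
      Real.inv_rpow (by positivity), Real.inv_rpow (by positivity),
      Real.mul_rpow (by positivity) (by positivity),
      h1 u hu, h1 v hv, h1 w hw, h1 l hl, ← hc, ← ha, ← he]
    ring
  rw [heq]
  have hkey := wkey (c := c) (a := a) (u := u) (v := v) (w := w)
    (by rw [hc]; exact mul_nonneg (by linarith) hr0.le)
    (by rw [hc, ha]; exact mul_le_mul_of_nonneg_right (by linarith) hr0.le) hu hv hw huvw
  exact mul_le_mul_of_nonneg_right hkey (by positivity)

lemma ofReal_weight_cancel {x a b : ℝ} (hx : 0 ≤ x) (ha : 0 < a) (hb : 0 < b) (X Y : ℝ≥0∞) :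
    ENNReal.ofReal x * (X * Y) =
      ENNReal.ofReal (x * a⁻¹ * b⁻¹) * (ENNReal.ofReal a * X * (ENNReal.ofReal b * Y)) := by
  rw [show ENNReal.ofReal (x * a⁻¹ * b⁻¹) * (ENNReal.ofReal a * X * (ENNReal.ofReal b * Y)) =
      ENNReal.ofReal (x * a⁻¹ * b⁻¹) * ENNReal.ofReal a * ENNReal.ofReal b * (X * Y) from by ring,
    ← ENNReal.ofReal_mul (mul_nonneg (mul_nonneg hx (inv_nonneg.2 ha.le)) (inv_nonneg.2 hb.le)),
    ← ENNReal.ofReal_mul (mul_nonneg (mul_nonneg (mul_nonneg hx (inv_nonneg.2 ha.le))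
      (inv_nonneg.2 hb.le)) ha.le)]
  rw [show x * a⁻¹ * b⁻¹ * a * b = x from by field_simp]

/-- The multiplicative embedding `X^r_{s,b} · X^r_{s−1,0} ↪ X^r_{s−1,0}` in dimension
`n = 2`, stated on the Fourier side as a weighted convolution estimate: for `1 < r ≤ 2`,
`b > 1/r` and `s > 1 + 1/r`,
`‖⟨ξ⟩^{s−1}(F∗G)‖_{L^{r'}} ≤ C ‖⟨ξ⟩^s⟨|τ|−|ξ|⟩^b F‖_{L^{r'}} ‖⟨ξ⟩^{s−1} G‖_{L^{r'}}`. -/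
theorem mult_embedding_Xsb (r r' b s : ℝ) (hr : 1 < r) (hr2 : r ≤ 2)
    (hrr' : 1 / r + 1 / r' = 1) (hb : 1 / r < b) (hs : 1 + 1 / r < s) :
    ∃ C : ℝ≥0, ∀ F G : ℝ × EuclideanSpace ℝ (Fin 2) → ℝ≥0∞,
      Measurable F → Measurable G →
      (∫⁻ p : ℝ × EuclideanSpace ℝ (Fin 2),
          (ENNReal.ofReal ((1 + ‖p.2‖) ^ (s - 1)) *
            ∫⁻ q : ℝ × EuclideanSpace ℝ (Fin 2), F q * G (p - q)) ^ r') ^ (1 / r')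
        ≤ C * (∫⁻ p : ℝ × EuclideanSpace ℝ (Fin 2),
              (ENNReal.ofReal ((1 + ‖p.2‖) ^ s) *
                ENNReal.ofReal ((1 + |(|p.1|) - ‖p.2‖|) ^ b) * F p) ^ r') ^ (1 / r')
            * (∫⁻ p : ℝ × EuclideanSpace ℝ (Fin 2),
              (ENNReal.ofReal ((1 + ‖p.2‖) ^ (s - 1)) * G p) ^ r') ^ (1 / r') := by
  have hr0 : (0:ℝ) < r := lt_trans one_pos hr
  have h1r : 0 < 1 / r := by positivity
  have h1r1 : 1 / r < 1 := by rw [div_lt_one hr0]; exact hr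
  have h1r' : 0 < 1 / r' := by linarith
  have hr'0 : 0 < r' := one_div_pos.mp h1r'
  have hconj : Real.HolderConjugate r r' := ⟨by rw [inv_one, ← one_div, ← one_div]; exact hrr', hr0, hr'0⟩
  have hs1 : 1 ≤ s := by linarith
  have hb0 : 0 < b := lt_trans h1r hb
  set c : ℝ := (s - 1) * r with hc_def
  set a : ℝ := s * r with ha_def
  set e : ℝ := b * r with he_def
  have hc0 : 0 ≤ c := mul_nonneg (by linarith) hr0.le
  have hca : c ≤ a := mul_le_mul_of_nonneg_right (by linarith) hr0.le
  have ha2 : 2 < a := by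
    have h' : (1 + 1 / r) * r = r + 1 := by field_simp
    nlinarith [mul_lt_mul_of_pos_right hs hr0]
  have he1 : 1 < e := by
    have h' : (1 / r) * r = 1 := by field_simp
    nlinarith [mul_lt_mul_of_pos_right hb hr0]
  set Kb : ℝ≥0∞ := ∫⁻ α : ℝ, ENNReal.ofReal ((1 + ‖α‖) ^ (-e)) with hKb_def
  set Ka : ℝ≥0∞ := ∫⁻ η : EuclideanSpace ℝ (Fin 2), ENNReal.ofReal ((1 + ‖η‖) ^ (-a)) with hKa_def
  set K : ℝ≥0∞ := ENNReal.ofReal (2 ^ c) * ((2 * Kb) * (2 * Ka)) with hK_def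
  have hKb : Kb ≠ ⊤ := by
    rw [hKb_def]
    exact (finite_integral_one_add_norm (by simpa using he1)).ne
  have hKa : Ka ≠ ⊤ := by
    rw [hKa_def]
    refine (finite_integral_one_add_norm ?_).ne
    simpa [finrank_euclideanSpace] using ha2
  have hKne : K ≠ ⊤ := by
    rw [hK_def]
    exact ENNReal.mul_ne_top ENNReal.ofReal_ne_top
      (ENNReal.mul_ne_top (ENNReal.mul_ne_top ENNReal.ofNat_ne_top hKb)
        (ENNReal.mul_ne_top ENNReal.ofNat_ne_top hKa))
  refine ⟨(K ^ (1 / r)).toNNReal, ?_⟩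
  intro F G hF hG
  set wF : ℝ × EuclideanSpace ℝ (Fin 2) → ℝ :=
    fun q => (1 + ‖q.2‖) ^ s * (1 + |(|q.1|) - ‖q.2‖|) ^ b with hwF
  set Φ : ℝ × EuclideanSpace ℝ (Fin 2) → ℝ≥0∞ :=
    fun q => ENNReal.ofReal (wF q) * F q with hΦ
  set Ψ : ℝ × EuclideanSpace ℝ (Fin 2) → ℝ≥0∞ :=
    fun q => ENNReal.ofReal ((1 + ‖q.2‖) ^ (s - 1)) * G q with hΨ
  set m : ℝ × EuclideanSpace ℝ (Fin 2) → ℝ × EuclideanSpace ℝ (Fin 2) → ℝ≥0∞ :=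
    fun p q => ENNReal.ofReal
      ((1 + ‖p.2‖) ^ (s - 1) * (wF q)⁻¹ * ((1 + ‖(p - q).2‖) ^ (s - 1))⁻¹) with hm
  set D : ℝ × EuclideanSpace ℝ (Fin 2) → ℝ × EuclideanSpace ℝ (Fin 2) → ℝ≥0∞ :=
    fun p q => (ENNReal.ofReal (2 ^ c) *
        (ENNReal.ofReal (((1 + ‖q.2‖) ^ a)⁻¹) + ENNReal.ofReal (((1 + ‖p.2 - q.2‖) ^ a)⁻¹))) *
      ENNReal.ofReal (((1 + |(|q.1|) - ‖q.2‖|) ^ e)⁻¹) with hD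
  have hwFpos : ∀ q, 0 < wF q := fun q => by rw [hwF]; positivity
  have hwFm : Measurable wF := by rw [hwF]; fun_prop
  have hΦm : Measurable Φ := by rw [hΦ]; exact (hwFm.ennreal_ofReal).mul hF
  have hΨm : Measurable Ψ := by rw [hΨ]; fun_prop
  have hmm : ∀ p, Measurable (m p) := by
    intro p; simp only [hm, hwF]; fun_prop
  -- pointwise weight redistribution
  have hprod : ∀ p q, ENNReal.ofReal ((1 + ‖p.2‖) ^ (s - 1)) * (F q * G (p - q)) =
      m p q * (Φ q * Ψ (p - q)) := by
    intro p q
    simp only [hm, hΦ, hΨ]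
    exact ofReal_weight_cancel (by positivity) (hwFpos q) (by positivity) (F q) (G (p - q))
  -- pointwise kernel bound
  have hmnn : ∀ p q, 0 ≤ (1 + ‖p.2‖) ^ (s - 1) * (wF q)⁻¹ * ((1 + ‖(p - q).2‖) ^ (s - 1))⁻¹ :=
    fun p q => mul_nonneg (mul_nonneg (Real.rpow_nonneg (by positivity) _)
      (inv_nonneg.2 (hwFpos q).le)) (inv_nonneg.2 (by positivity))
  have hpt : ∀ p q, (m p q) ^ r ≤ D p q := by
    intro p q
    simp only [hm, hD]
    rw [ENNReal.ofReal_rpow_of_nonneg (hmnn p q) hr0.le]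
    have htri : ‖p.2‖ ≤ ‖q.2‖ + ‖p.2 - q.2‖ := by
      have h := norm_add_le q.2 (p.2 - q.2)
      rwa [show q.2 + (p.2 - q.2) = p.2 from by abel] at h
    have hbd := mker hr0 hs1 hc_def ha_def he_def (norm_nonneg p.2) (norm_nonneg q.2)
      (norm_nonneg (p.2 - q.2)) (abs_nonneg (|q.1| - ‖q.2‖)) htri
    calc ENNReal.ofReal (((1 + ‖p.2‖) ^ (s - 1) * (wF q)⁻¹ *
            ((1 + ‖(p - q).2‖) ^ (s - 1))⁻¹) ^ r)
        ≤ ENNReal.ofReal ((2 ^ c * (((1 + ‖q.2‖) ^ a)⁻¹ + ((1 + ‖p.2 - q.2‖) ^ a)⁻¹)) *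
            ((1 + |(|q.1|) - ‖q.2‖|) ^ e)⁻¹) := by
          refine ENNReal.ofReal_le_ofReal ?_
          rw [hwF, Prod.snd_sub]
          exact hbd
      _ = _ := by
          rw [ENNReal.ofReal_mul (by positivity), ENNReal.ofReal_mul (by positivity),
            ENNReal.ofReal_add (by positivity) (by positivity)]
  -- kernel integral bound
  have hDm : ∀ p, Measurable (D p) := by intro p; simp only [hD]; fun_prop
  have hker : ∀ p, (∫⁻ q : ℝ × EuclideanSpace ℝ (Fin 2), (m p q) ^ r) ≤ K := by
    intro p
    calc (∫⁻ q : ℝ × EuclideanSpace ℝ (Fin 2), (m p q) ^ r)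
        ≤ ∫⁻ q : ℝ × EuclideanSpace ℝ (Fin 2), D p q := lintegral_mono (hpt p)
      _ = ∫⁻ η : EuclideanSpace ℝ (Fin 2), ∫⁻ α : ℝ, D p (α, η) := by
          rw [Measure.volume_eq_prod]
          exact lintegral_prod_symm _ (hDm p).aemeasurable
      _ ≤ ∫⁻ η : EuclideanSpace ℝ (Fin 2), (ENNReal.ofReal (2 ^ c) *
            (ENNReal.ofReal (((1 + ‖η‖) ^ a)⁻¹) + ENNReal.ofReal (((1 + ‖p.2 - η‖) ^ a)⁻¹))) *
            (2 * Kb) := by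
          refine lintegral_mono fun η => ?_
          have heq : (∫⁻ α : ℝ, D p (α, η)) = (ENNReal.ofReal (2 ^ c) *
              (ENNReal.ofReal (((1 + ‖η‖) ^ a)⁻¹) + ENNReal.ofReal (((1 + ‖p.2 - η‖) ^ a)⁻¹))) *
              ∫⁻ α : ℝ, ENNReal.ofReal (((1 + |(|α|) - ‖η‖|) ^ e)⁻¹) := by
            simp only [hD]
            exact lintegral_const_mul _ (by fun_prop)
          rw [heq]
          exact mul_le_mul_right (tint ‖η‖) _
      _ = ∫⁻ η : EuclideanSpace ℝ (Fin 2), (ENNReal.ofReal (2 ^ c) * (2 * Kb)) *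
            (ENNReal.ofReal (((1 + ‖η‖) ^ a)⁻¹) + ENNReal.ofReal (((1 + ‖p.2 - η‖) ^ a)⁻¹)) :=
          lintegral_congr fun η => by ring
      _ = (ENNReal.ofReal (2 ^ c) * (2 * Kb)) * ∫⁻ η : EuclideanSpace ℝ (Fin 2),
            (ENNReal.ofReal (((1 + ‖η‖) ^ a)⁻¹) + ENNReal.ofReal (((1 + ‖p.2 - η‖) ^ a)⁻¹)) :=
          lintegral_const_mul _ (by fun_prop)
      _ = (ENNReal.ofReal (2 ^ c) * (2 * Kb)) * (Ka + Ka) := by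
          congr 1
          rw [lintegral_add_left (by fun_prop)]
          congr 1
          · exact lintegral_congr fun η => by rw [← Real.rpow_neg (by positivity)]
          · calc (∫⁻ η : EuclideanSpace ℝ (Fin 2), ENNReal.ofReal (((1 + ‖p.2 - η‖) ^ a)⁻¹))
                = ∫⁻ η : EuclideanSpace ℝ (Fin 2),
                    (fun x : EuclideanSpace ℝ (Fin 2) => ENNReal.ofReal ((1 + ‖x‖) ^ (-a)))
                    (η - p.2) := by
                  refine lintegral_congr fun η => ?_
                  rw [norm_sub_rev p.2 η, ← Real.rpow_neg (by positivity)]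
              _ = Ka := lintegral_sub_right_eq_self
                  (fun x : EuclideanSpace ℝ (Fin 2) => ENNReal.ofReal ((1 + ‖x‖) ^ (-a))) p.2
      _ = K := by rw [hK_def, ← two_mul, mul_assoc]
  -- Hölder step
  have hhold : ∀ p, (∫⁻ q : ℝ × EuclideanSpace ℝ (Fin 2), m p q * (Φ q * Ψ (p - q))) ≤
      K ^ (1 / r) * (∫⁻ q : ℝ × EuclideanSpace ℝ (Fin 2), (Φ q) ^ r' * (Ψ (p - q)) ^ r') ^ (1 / r') := by
    intro p
    have hg : Measurable fun q : ℝ × EuclideanSpace ℝ (Fin 2) => Φ q * Ψ (p - q) :=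
      hΦm.mul (hΨm.comp (measurable_const.sub measurable_id))
    have h1 := ENNReal.lintegral_mul_le_Lp_mul_Lq volume hconj (hmm p).aemeasurable hg.aemeasurable
    simp only [Pi.mul_apply] at h1
    refine h1.trans (mul_le_mul' (ENNReal.rpow_le_rpow (hker p) (by positivity)) (le_of_eq ?_))
    congr 1
    exact lintegral_congr fun q => ENNReal.mul_rpow_of_nonneg _ _ hr'0.le
  -- main pointwise-in-p estimate
  have hmain : ∀ p, ENNReal.ofReal ((1 + ‖p.2‖) ^ (s - 1)) *
      (∫⁻ q : ℝ × EuclideanSpace ℝ (Fin 2), F q * G (p - q)) ≤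
      K ^ (1 / r) * (∫⁻ q : ℝ × EuclideanSpace ℝ (Fin 2), (Φ q) ^ r' * (Ψ (p - q)) ^ r') ^ (1 / r') := by
    intro p
    have hFGm : Measurable fun q : ℝ × EuclideanSpace ℝ (Fin 2) => F q * G (p - q) := by fun_prop
    rw [← lintegral_const_mul _ hFGm, lintegral_congr (hprod p)]
    exact hhold p
  -- convolution of the r'-th powers
  haveI hri : (volume : Measure (ℝ × EuclideanSpace ℝ (Fin 2))).IsAddRightInvariant := by
    rw [Measure.volume_eq_prod]; infer_instance
  set T : ℝ × EuclideanSpace ℝ (Fin 2) → ℝ≥0∞ :=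
    fun p => ∫⁻ q : ℝ × EuclideanSpace ℝ (Fin 2), (Φ q) ^ r' * (Ψ (p - q)) ^ r' with hT
  have huncm : Measurable fun z : (ℝ × EuclideanSpace ℝ (Fin 2)) × (ℝ × EuclideanSpace ℝ (Fin 2)) =>
      (Φ z.2) ^ r' * (Ψ (z.1 - z.2)) ^ r' := by fun_prop
  have hTm : Measurable T := by
    rw [hT]
    exact Measurable.lintegral_prod_right huncm
  have hTint : (∫⁻ p : ℝ × EuclideanSpace ℝ (Fin 2), T p) =
      (∫⁻ p : ℝ × EuclideanSpace ℝ (Fin 2), (Φ p) ^ r') *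
      (∫⁻ p : ℝ × EuclideanSpace ℝ (Fin 2), (Ψ p) ^ r') := by
    rw [hT, lintegral_lintegral_swap huncm.aemeasurable]
    calc (∫⁻ q : ℝ × EuclideanSpace ℝ (Fin 2), ∫⁻ p : ℝ × EuclideanSpace ℝ (Fin 2),
            (Φ q) ^ r' * (Ψ (p - q)) ^ r')
        = ∫⁻ q : ℝ × EuclideanSpace ℝ (Fin 2), (Φ q) ^ r' *
            ∫⁻ p : ℝ × EuclideanSpace ℝ (Fin 2), (Ψ (p - q)) ^ r' :=
          lintegral_congr fun q => lintegral_const_mul _ (by fun_prop)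
      _ = ∫⁻ q : ℝ × EuclideanSpace ℝ (Fin 2), (Φ q) ^ r' *
            ∫⁻ p : ℝ × EuclideanSpace ℝ (Fin 2), (Ψ p) ^ r' :=
          lintegral_congr fun q => by
            rw [lintegral_sub_right_eq_self (fun p => (Ψ p) ^ r') q]
      _ = _ := lintegral_mul_const _ (by fun_prop)
  -- assemble
  have hA : (∫⁻ p : ℝ × EuclideanSpace ℝ (Fin 2),
      (ENNReal.ofReal ((1 + ‖p.2‖) ^ s) *
        ENNReal.ofReal ((1 + |(|p.1|) - ‖p.2‖|) ^ b) * F p) ^ r') =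
      ∫⁻ p : ℝ × EuclideanSpace ℝ (Fin 2), (Φ p) ^ r' := by
    refine lintegral_congr fun p => ?_
    simp only [hΦ, hwF]
    rw [ENNReal.ofReal_mul (by positivity)]
  have hB : (∫⁻ p : ℝ × EuclideanSpace ℝ (Fin 2),
      (ENNReal.ofReal ((1 + ‖p.2‖) ^ (s - 1)) * G p) ^ r') =
      ∫⁻ p : ℝ × EuclideanSpace ℝ (Fin 2), (Ψ p) ^ r' := by
    refine lintegral_congr fun p => ?_
    simp only [hΨ]
  rw [hA, hB]
  calc (∫⁻ p : ℝ × EuclideanSpace ℝ (Fin 2),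
          (ENNReal.ofReal ((1 + ‖p.2‖) ^ (s - 1)) *
            ∫⁻ q : ℝ × EuclideanSpace ℝ (Fin 2), F q * G (p - q)) ^ r') ^ (1 / r')
      ≤ (∫⁻ p : ℝ × EuclideanSpace ℝ (Fin 2),
          (K ^ (1 / r) * (T p) ^ (1 / r')) ^ r') ^ (1 / r') := by
        refine ENNReal.rpow_le_rpow (lintegral_mono fun p => ?_) (by positivity)
        exact ENNReal.rpow_le_rpow (hmain p) hr'0.le
    _ = ((K ^ (1 / r)) ^ r' * ∫⁻ p : ℝ × EuclideanSpace ℝ (Fin 2), T p) ^ (1 / r') := by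
        rw [← lintegral_const_mul _ hTm]
        congr 1
        refine lintegral_congr fun p => ?_
        rw [ENNReal.mul_rpow_of_nonneg _ _ hr'0.le]
        congr 1
        rw [← ENNReal.rpow_mul, one_div_mul_cancel hr'0.ne', ENNReal.rpow_one]
    _ = ((K ^ (1 / r)) ^ r') ^ (1 / r') *
          ((∫⁻ p : ℝ × EuclideanSpace ℝ (Fin 2), (Φ p) ^ r') ^ (1 / r') *
           (∫⁻ p : ℝ × EuclideanSpace ℝ (Fin 2), (Ψ p) ^ r') ^ (1 / r')) := by
        rw [hTint, ENNReal.mul_rpow_of_nonneg ((K ^ (1 / r)) ^ r') _ (by positivity)]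
        congr 1
        exact ENNReal.mul_rpow_of_nonneg _ _ (by positivity)
    _ = ↑((K ^ (1 / r)).toNNReal) *
          (∫⁻ p : ℝ × EuclideanSpace ℝ (Fin 2), (Φ p) ^ r') ^ (1 / r') *
          (∫⁻ p : ℝ × EuclideanSpace ℝ (Fin 2), (Ψ p) ^ r') ^ (1 / r') := by
        rw [← ENNReal.rpow_mul, mul_one_div_cancel hr'0.ne', ENNReal.rpow_one,
          ENNReal.coe_toNNReal (ENNReal.rpow_ne_top_of_nonneg (by positivity) hKne), mul_assoc]
end

section
/- Let 1<r≤2, b>1/r and s>1+1/r. Then there is a constant C such that for all measurable F, G : ℝ×ℝ² → [0,∞], ‖F∗G‖_{L^{r'}(ℝ×ℝ², dτ dξ)} ≤ C ‖⟨ξ⟩ ⟨|τ|−|ξ|⟩^b F(τ,ξ)‖_{L^{r'}} ‖⟨ξ⟩^{s−1} G(τ,ξ)‖_{L^{r'}}. (On the Fourier side this is the product estimate ‖fg‖_{L̂^r_{t,x}} ≲ ‖f‖_{X^r_{1,b}} ‖g‖_{X^r_{s−1,0}} in dimension n = 2.) -/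
open MeasureTheory ENNReal NNReal

set_option maxHeartbeats 1000000

abbrev P2 := ℝ × EuclideanSpace ℝ (Fin 2)
abbrev E2' := EuclideanSpace ℝ (Fin 2)

instance : MeasureTheory.Measure.IsAddRightInvariant (MeasureTheory.volume : MeasureTheory.Measure P2) :=
  (MeasureTheory.Measure.volume_eq_prod ℝ (EuclideanSpace ℝ (Fin 2))) ▸ inferInstance



lemma Measurable.errpow {α} [MeasurableSpace α] {f : α → ℝ≥0∞} (hf : Measurable f) (y : ℝ) :
    Measurable fun x => f x ^ y :=
  ENNReal.continuous_rpow_const.measurable.comp hf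

lemma conv_holder {r r' : ℝ} (hconj : r.HolderConjugate r')
    (w v : P2 → ℝ≥0∞) (hw : Measurable w) (hv : Measurable v)
    (M : ℝ≥0∞)
    (hK : ∀ p : P2, (∫⁻ q, ((w q)⁻¹ * (v (p - q))⁻¹) ^ r) ≤ M)
    (F G : P2 → ℝ≥0∞) (hF : Measurable F) (hG : Measurable G)
    (hw0 : ∀ p, w p ≠ 0) (hwt : ∀ p, w p ≠ ∞) (hv0 : ∀ p, v p ≠ 0) (hvt : ∀ p, v p ≠ ∞) :
    (∫⁻ p, (∫⁻ q, F q * G (p - q)) ^ r') ^ (1 / r')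
      ≤ M ^ (1 / r) * (∫⁻ p, (w p * F p) ^ r') ^ (1 / r')
        * (∫⁻ p, (v p * G p) ^ r') ^ (1 / r') := by
  have hr0 : (0:ℝ) < r := hconj.pos
  have hr'0 : (0:ℝ) < r' := hconj.symm.pos
  have hA : Measurable fun q => w q * F q := hw.mul hF
  have hB : Measurable fun q => v q * G q := hv.mul hG
  set Φ : P2 → ℝ≥0∞ := fun p => ∫⁻ q, (w q * F q * (v (p - q) * G (p - q))) ^ r' with hΦ
  -- Step 1: pointwise Hölder
  have step1 : ∀ p : P2, (∫⁻ q, F q * G (p - q)) ≤ (Φ p) ^ (1 / r') * M ^ (1 / r) := by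
    intro p
    have hsub : Measurable fun q : P2 => p - q := measurable_const.sub measurable_id
    have heq : ∀ q : P2, F q * G (p - q) =
        ((fun q => w q * F q * (v (p - q) * G (p - q))) *
          (fun q => (w q)⁻¹ * (v (p - q))⁻¹)) q := by
      intro q
      show F q * G (p - q) = w q * F q * (v (p - q) * G (p - q)) * ((w q)⁻¹ * (v (p - q))⁻¹)
      have h1 : w q * F q * (v (p - q) * G (p - q)) * ((w q)⁻¹ * (v (p - q))⁻¹)
          = (w q * (w q)⁻¹) * (v (p - q) * (v (p - q))⁻¹) * (F q * G (p - q)) := by ring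
      rw [h1, ENNReal.mul_inv_cancel (hw0 q) (hwt q), ENNReal.mul_inv_cancel (hv0 _) (hvt _),
        one_mul, one_mul]
    rw [lintegral_congr heq]
    refine le_trans (ENNReal.lintegral_mul_le_Lp_mul_Lq volume hconj.symm ?_ ?_) ?_
    · exact (hA.mul ((hB.comp hsub))).aemeasurable
    · exact ((hw.inv).mul ((hv.comp hsub).inv)).aemeasurable
    · exact mul_le_mul_right (ENNReal.rpow_le_rpow (hK p) (by positivity)) _
  -- measurability of the inner kernel on the product space
  have hker : Measurable fun z : P2 × P2 =>
      (w z.2 * F z.2 * (v (z.1 - z.2) * G (z.1 - z.2))) ^ r' := by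
    exact ((hA.comp measurable_snd).mul
      (hB.comp (measurable_fst.sub measurable_snd))).errpow r'
  have hΦmeas : Measurable Φ := hker.lintegral_prod_right'
  -- Step 2
  have step2 : (∫⁻ p, (∫⁻ q, F q * G (p - q)) ^ r')
      ≤ M ^ (r' / r) * ∫⁻ p, Φ p := by
    have pt : ∀ p : P2, (∫⁻ q, F q * G (p - q)) ^ r' ≤ M ^ (r' / r) * Φ p := by
      intro p
      calc (∫⁻ q, F q * G (p - q)) ^ r' ≤ ((Φ p) ^ (1/r') * M ^ (1/r)) ^ r' :=
            ENNReal.rpow_le_rpow (step1 p) hr'0.le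
        _ = M ^ (r' / r) * Φ p := by
            rw [ENNReal.mul_rpow_of_nonneg _ _ hr'0.le, ← ENNReal.rpow_mul,
              ← ENNReal.rpow_mul, one_div_mul_cancel hr'0.ne', ENNReal.rpow_one,
              mul_comm]
            congr 2
            field_simp
    calc (∫⁻ p, (∫⁻ q, F q * G (p - q)) ^ r') ≤ ∫⁻ p, M ^ (r' / r) * Φ p :=
          lintegral_mono pt
      _ = M ^ (r' / r) * ∫⁻ p, Φ p := lintegral_const_mul'' _ hΦmeas.aemeasurable
  -- Step 3: Tonelli for the convolution of powers
  have step3 : (∫⁻ p, Φ p)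
      = (∫⁻ p, (w p * F p) ^ r') * ∫⁻ p, (v p * G p) ^ r' := by
    have hsplit : ∀ p q : P2, (w q * F q * (v (p - q) * G (p - q))) ^ r'
        = (w q * F q) ^ r' * (v (p - q) * G (p - q)) ^ r' := fun p q =>
      ENNReal.mul_rpow_of_nonneg _ _ hr'0.le
    calc (∫⁻ p, Φ p)
        = ∫⁻ p, ∫⁻ q, (w q * F q) ^ r' * (v (p - q) * G (p - q)) ^ r' := by
          simp_rw [hΦ, hsplit]
      _ = ∫⁻ q, ∫⁻ p, (w q * F q) ^ r' * (v (p - q) * G (p - q)) ^ r' := by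
          apply lintegral_lintegral_swap
          exact ((((hA.comp measurable_snd).errpow r').mul
            ((hB.comp (measurable_fst.sub measurable_snd)).errpow r'))).aemeasurable
      _ = ∫⁻ q, (w q * F q) ^ r' * ∫⁻ p, (v (p - q) * G (p - q)) ^ r' := by
          refine lintegral_congr fun q => ?_
          exact lintegral_const_mul'' _ (((hB.comp ((measurable_id.sub measurable_const) : Measurable fun p : P2 => p - q)).errpow r')).aemeasurable
      _ = ∫⁻ q, (w q * F q) ^ r' * ∫⁻ p, (v p * G p) ^ r' := by
          refine lintegral_congr fun q => ?_
          congr 1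
          exact lintegral_sub_right_eq_self (fun p => (v p * G p) ^ r') q
      _ = (∫⁻ p, (w p * F p) ^ r') * ∫⁻ p, (v p * G p) ^ r' :=
          lintegral_mul_const'' _ (hA.errpow r').aemeasurable
  -- Conclusion
  calc (∫⁻ p, (∫⁻ q, F q * G (p - q)) ^ r') ^ (1 / r')
      ≤ (M ^ (r' / r) * ((∫⁻ p, (w p * F p) ^ r') * ∫⁻ p, (v p * G p) ^ r')) ^ (1 / r') := by
        rw [← step3]; exact ENNReal.rpow_le_rpow step2 (by positivity)
    _ = M ^ (1 / r) * (∫⁻ p, (w p * F p) ^ r') ^ (1 / r')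
        * (∫⁻ p, (v p * G p) ^ r') ^ (1 / r') := by
        rw [ENNReal.mul_rpow_of_nonneg _ _ (by positivity), ENNReal.mul_rpow_of_nonneg _ _ (by positivity),
          ← ENNReal.rpow_mul, ← mul_assoc]
        congr 2
        rw [show r' / r * (1 / r') = 1 / r by field_simp]



lemma measurable_rpow_of_pos {α} [MeasurableSpace α] {f : α → ℝ} (hf : Measurable f)
    (hpos : ∀ x, 0 < f x) (c : ℝ) : Measurable fun x => f x ^ c := by
  have h : (fun x => f x ^ c) = fun x => Real.exp (Real.log (f x) * c) :=
    funext fun x => Real.rpow_def_of_pos (hpos x) c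
  rw [h]
  exact Real.measurable_exp.comp ((Real.measurable_log.comp hf).mul_const c)

lemma inv_rpow_ofReal {a : ℝ} (ha : 0 < a) (t : ℝ) :
    ((ENNReal.ofReal a)⁻¹) ^ t = ENNReal.ofReal (a ^ (-t)) := by
  rw [ENNReal.inv_rpow, ← ENNReal.rpow_neg, ENNReal.ofReal_rpow_of_pos ha]

-- τ-integral bound
lemma tau_bound {β : ℝ} (c : ℝ) :
    ∫⁻ τ : ℝ, ENNReal.ofReal ((1 + |(|τ|) - c|) ^ (-β)) ≤
      2 * ∫⁻ u : ℝ, ENNReal.ofReal ((1 + |u|) ^ (-β)) := by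
  have key : ∀ τ : ℝ, ENNReal.ofReal ((1 + |(|τ|) - c|) ^ (-β)) ≤
      ENNReal.ofReal ((1 + |τ - c|) ^ (-β)) + ENNReal.ofReal ((1 + |τ + c|) ^ (-β)) := by
    intro τ
    rcases le_or_gt 0 τ with h | h
    · rw [abs_of_nonneg h]; exact le_add_right le_rfl
    · have habs : |(|τ|) - c| = |τ + c| := by rw [abs_of_neg h, ← abs_neg]; ring_nf
      rw [habs]; exact le_add_left le_rfl
  calc ∫⁻ τ : ℝ, ENNReal.ofReal ((1 + |(|τ|) - c|) ^ (-β))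
      ≤ ∫⁻ τ : ℝ, (ENNReal.ofReal ((1 + |τ - c|) ^ (-β)) +
          ENNReal.ofReal ((1 + |τ + c|) ^ (-β))) := lintegral_mono key
    _ = (∫⁻ τ : ℝ, ENNReal.ofReal ((1 + |τ - c|) ^ (-β))) +
        ∫⁻ τ : ℝ, ENNReal.ofReal ((1 + |τ + c|) ^ (-β)) := by
        apply lintegral_add_left
        exact (measurable_rpow_of_pos
          (measurable_const.add (measurable_id.sub measurable_const).abs)
          (fun τ => by show (0:ℝ) < 1 + |τ - c|; positivity) _).ennreal_ofReal
    _ = 2 * ∫⁻ u : ℝ, ENNReal.ofReal ((1 + |u|) ^ (-β)) := by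
        rw [lintegral_sub_right_eq_self (fun u => ENNReal.ofReal ((1 + |u|) ^ (-β))) c,
          lintegral_add_right_eq_self (fun u => ENNReal.ofReal ((1 + |u|) ^ (-β))) c,
          two_mul]

-- ξ-integral bound
lemma xi_bound {a c : ℝ} (ha : 0 < a) (hc : 0 < c) (z : E2') :
    ∫⁻ x : E2', ENNReal.ofReal ((1 + ‖x‖) ^ (-a) * (1 + ‖z - x‖) ^ (-c)) ≤
      2 * ∫⁻ x : E2', ENNReal.ofReal ((1 + ‖x‖) ^ (-(a + c))) := by
  have key : ∀ x : E2', (1 + ‖x‖) ^ (-a) * (1 + ‖z - x‖) ^ (-c) ≤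
      (1 + ‖x‖) ^ (-(a + c)) + (1 + ‖z - x‖) ^ (-(a + c)) := by
    intro x
    set A : ℝ := 1 + ‖x‖ with hA
    set B : ℝ := 1 + ‖z - x‖ with hB
    have hA0 : 0 < A := by positivity
    have hB0 : 0 < B := by positivity
    have hsplit : -(a + c) = -a + -c := by ring
    rcases le_total A B with h | h
    · have h1 : B ^ (-c) ≤ A ^ (-c) := Real.rpow_le_rpow_of_nonpos hA0 h (by linarith)
      have h2 : A ^ (-a) * B ^ (-c) ≤ A ^ (-a) * A ^ (-c) :=
        mul_le_mul_of_nonneg_left h1 (Real.rpow_nonneg hA0.le _)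
      have h3 : A ^ (-a) * A ^ (-c) = A ^ (-(a + c)) := by
        rw [hsplit, Real.rpow_add hA0]
      calc A ^ (-a) * B ^ (-c) ≤ A ^ (-(a + c)) := by rw [← h3]; exact h2
        _ ≤ _ := le_add_of_nonneg_right (Real.rpow_nonneg hB0.le _)
    · have h1 : A ^ (-a) ≤ B ^ (-a) := Real.rpow_le_rpow_of_nonpos hB0 h (by linarith)
      have h2 : A ^ (-a) * B ^ (-c) ≤ B ^ (-a) * B ^ (-c) :=
        mul_le_mul_of_nonneg_right h1 (Real.rpow_nonneg hB0.le _)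
      have h3 : B ^ (-a) * B ^ (-c) = B ^ (-(a + c)) := by
        rw [hsplit, Real.rpow_add hB0]
      calc A ^ (-a) * B ^ (-c) ≤ B ^ (-(a + c)) := by rw [← h3]; exact h2
        _ ≤ _ := le_add_of_nonneg_left (Real.rpow_nonneg hA0.le _)
  calc ∫⁻ x : E2', ENNReal.ofReal ((1 + ‖x‖) ^ (-a) * (1 + ‖z - x‖) ^ (-c))
      ≤ ∫⁻ x : E2', (ENNReal.ofReal ((1 + ‖x‖) ^ (-(a + c))) +
          ENNReal.ofReal ((1 + ‖z - x‖) ^ (-(a + c)))) := by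
        refine lintegral_mono fun x => ?_
        refine le_trans (ENNReal.ofReal_le_ofReal (key x)) ?_
        rw [ENNReal.ofReal_add (Real.rpow_nonneg (by positivity) _)
          (Real.rpow_nonneg (by positivity) _)]
    _ = (∫⁻ x : E2', ENNReal.ofReal ((1 + ‖x‖) ^ (-(a + c)))) +
        ∫⁻ x : E2', ENNReal.ofReal ((1 + ‖z - x‖) ^ (-(a + c))) := by
        apply lintegral_add_left
        exact (measurable_rpow_of_pos (measurable_const.add measurable_norm)
          (fun x => by show (0:ℝ) < 1 + ‖x‖; positivity) _).ennreal_ofReal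
    _ = 2 * ∫⁻ x : E2', ENNReal.ofReal ((1 + ‖x‖) ^ (-(a + c))) := by
        have hrev : ∀ x : E2', ‖z - x‖ = ‖x - z‖ := fun x => norm_sub_rev z x
        simp_rw [hrev]
        rw [lintegral_sub_right_eq_self (fun u : E2' => ENNReal.ofReal ((1 + ‖u‖) ^ (-(a + c)))) z,
          two_mul]


/-- Fourier-side product estimate `‖fg‖_{L̂^r_{t,x}} ≲ ‖f‖_{X^r_{1,b}} ‖g‖_{X^r_{s−1,0}}`
in dimension `n = 2`: for `1 < r ≤ 2`, `b > 1/r` and `s > 1 + 1/r`,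
`‖F∗G‖_{L^{r'}(ℝ×ℝ²)} ≤ C ‖⟨ξ⟩⟨|τ|−|ξ|⟩^b F‖_{L^{r'}} ‖⟨ξ⟩^{s−1} G‖_{L^{r'}}`. -/
theorem product_estimate_X1b (r r' b s : ℝ) (hr : 1 < r) (hr2 : r ≤ 2)
    (hrr' : 1 / r + 1 / r' = 1) (hb : 1 / r < b) (hs : 1 + 1 / r < s) :
    ∃ C : ℝ≥0, ∀ F G : ℝ × EuclideanSpace ℝ (Fin 2) → ℝ≥0∞,
      Measurable F → Measurable G →
      (∫⁻ p : ℝ × EuclideanSpace ℝ (Fin 2),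
          (∫⁻ q : ℝ × EuclideanSpace ℝ (Fin 2), F q * G (p - q)) ^ r') ^ (1 / r')
        ≤ C * (∫⁻ p : ℝ × EuclideanSpace ℝ (Fin 2),
              ((ENNReal.ofReal (1 + ‖p.2‖) *
                ENNReal.ofReal ((1 + |(|p.1|) - ‖p.2‖|) ^ b)) * F p) ^ r') ^ (1 / r')
            * (∫⁻ p : ℝ × EuclideanSpace ℝ (Fin 2),
              (ENNReal.ofReal ((1 + ‖p.2‖) ^ (s - 1)) * G p) ^ r') ^ (1 / r') := by
  have hr0 : (0:ℝ) < r := lt_trans one_pos hr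
  have hconj : r.HolderConjugate r' := Real.holderConjugate_iff.mpr ⟨hr, by rw [← one_div, ← one_div]; exact hrr'⟩
  have hr'0 : (0:ℝ) < r' := hconj.symm.pos
  have h1r : (0:ℝ) < 1 / r := by positivity
  have hs1 : (1:ℝ) < s := by linarith
  have hbr : 1 < b * r := (div_lt_iff₀ hr0).mp hb
  have hsrpos : (0:ℝ) < (s - 1) * r := mul_pos (by linarith) hr0
  have hinv : 1 / r * r = 1 := by field_simp
  have hkey : 0 < (s - (1 + 1 / r)) * r := mul_pos (by linarith) hr0
  have hsr : 2 < r + (s - 1) * r := by nlinarith [hkey, hinv]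
  set I := ∫⁻ u : ℝ, ENNReal.ofReal ((1 + |u|) ^ (-(b * r))) with hIdef
  set J := ∫⁻ x : E2', ENNReal.ofReal ((1 + ‖x‖) ^ (-(r + (s - 1) * r))) with hJdef
  have hI : I ≠ ∞ := by
    have h := (integrable_one_add_norm (E := ℝ) (μ := volume) (r := b * r)
      (by simpa using hbr)).lintegral_lt_top
    rw [hIdef]
    simpa [Real.norm_eq_abs] using h.ne
  have hJ : J ≠ ∞ := by
    have h := (integrable_one_add_norm (E := E2') (μ := volume) (r := r + (s - 1) * r)
      (by simpa using hsr)).lintegral_lt_top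
    rw [hJdef]
    exact h.ne
  set M : ℝ≥0∞ := 2 * J * (2 * I) with hMdef
  have hM : M ≠ ∞ := by
    rw [hMdef]
    exact ENNReal.mul_ne_top (ENNReal.mul_ne_top (by simp) hJ) (ENNReal.mul_ne_top (by simp) hI)
  have hMr : M ^ (1 / r) ≠ ∞ := ENNReal.rpow_ne_top_of_nonneg (by positivity) hM
  refine ⟨(M ^ (1 / r)).toNNReal, ?_⟩
  intro F G hF hG
  -- the weights
  have hax : Measurable fun p : P2 => 1 + ‖p.2‖ := measurable_const.add measurable_snd.norm
  have hco : Measurable fun p : P2 => 1 + |(|p.1|) - ‖p.2‖| :=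
    measurable_const.add (measurable_fst.abs.sub measurable_snd.norm).abs
  have hw : Measurable fun p : P2 => ENNReal.ofReal (1 + ‖p.2‖) *
      ENNReal.ofReal ((1 + |(|p.1|) - ‖p.2‖|) ^ b) :=
    hax.ennreal_ofReal.mul
      (measurable_rpow_of_pos hco (fun p => by positivity) b).ennreal_ofReal
  have hv : Measurable fun p : P2 => ENNReal.ofReal ((1 + ‖p.2‖) ^ (s - 1)) :=
    (measurable_rpow_of_pos hax (fun p => by positivity) (s - 1)).ennreal_ofReal
  -- the kernel bound
  have hK : ∀ p : P2, (∫⁻ q : P2,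
      (((ENNReal.ofReal (1 + ‖q.2‖) * ENNReal.ofReal ((1 + |(|q.1|) - ‖q.2‖|) ^ b)))⁻¹ *
        ((ENNReal.ofReal ((1 + ‖(p - q).2‖) ^ (s - 1))))⁻¹) ^ r) ≤ M := by
    intro p
    have hpt : ∀ q : P2,
        (((ENNReal.ofReal (1 + ‖q.2‖) * ENNReal.ofReal ((1 + |(|q.1|) - ‖q.2‖|) ^ b)))⁻¹ *
          ((ENNReal.ofReal ((1 + ‖(p - q).2‖) ^ (s - 1))))⁻¹) ^ r =
        ENNReal.ofReal ((1 + ‖q.2‖) ^ (-r) * (1 + ‖p.2 - q.2‖) ^ (-((s - 1) * r))) *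
          ENNReal.ofReal ((1 + |(|q.1|) - ‖q.2‖|) ^ (-(b * r))) := by
      intro q
      have e1 : (0:ℝ) < 1 + ‖q.2‖ := by positivity
      have e1' : (0:ℝ) < 1 + |(|q.1|) - ‖q.2‖| := by positivity
      have e2 : (0:ℝ) < (1 + |(|q.1|) - ‖q.2‖|) ^ b := Real.rpow_pos_of_pos e1' b
      have e3 : (0:ℝ) < 1 + ‖p.2 - q.2‖ := by positivity
      have e3' : (0:ℝ) < (1 + ‖p.2 - q.2‖) ^ (s - 1) := Real.rpow_pos_of_pos e3 _
      have hsnd : (p - q).2 = p.2 - q.2 := rfl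
      rw [hsnd, ENNReal.mul_rpow_of_nonneg _ _ hr0.le,
        ENNReal.mul_inv (Or.inl (ENNReal.ofReal_pos.mpr e1).ne') (Or.inl ENNReal.ofReal_ne_top),
        ENNReal.mul_rpow_of_nonneg _ _ hr0.le,
        inv_rpow_ofReal e1 r, inv_rpow_ofReal e2 r, inv_rpow_ofReal e3' r,
        ← Real.rpow_mul e1'.le, ← Real.rpow_mul e3.le, mul_neg, mul_neg,
        ← ENNReal.ofReal_mul (Real.rpow_nonneg e1.le _),
        ← ENNReal.ofReal_mul (by positivity),
        ← ENNReal.ofReal_mul (by positivity)]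
      congr 1
      ring
    rw [lintegral_congr hpt, Measure.volume_eq_prod, lintegral_prod_symm]
    · have step : ∀ ξ : E2', (∫⁻ τ : ℝ,
          ENNReal.ofReal ((1 + ‖ξ‖) ^ (-r) * (1 + ‖p.2 - ξ‖) ^ (-((s - 1) * r))) *
            ENNReal.ofReal ((1 + |(|τ|) - ‖ξ‖|) ^ (-(b * r))))
          ≤ ENNReal.ofReal ((1 + ‖ξ‖) ^ (-r) * (1 + ‖p.2 - ξ‖) ^ (-((s - 1) * r))) * (2 * I) := by
        intro ξ
        rw [lintegral_const_mul' _ _ ENNReal.ofReal_ne_top]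
        refine mul_le_mul_right ?_ _
        rw [hIdef]
        exact tau_bound (‖ξ‖)
      calc (∫⁻ ξ : E2', ∫⁻ τ : ℝ,
            ENNReal.ofReal ((1 + ‖ξ‖) ^ (-r) * (1 + ‖p.2 - ξ‖) ^ (-((s - 1) * r))) *
              ENNReal.ofReal ((1 + |(|τ|) - ‖ξ‖|) ^ (-(b * r))))
          ≤ ∫⁻ ξ : E2',
            ENNReal.ofReal ((1 + ‖ξ‖) ^ (-r) * (1 + ‖p.2 - ξ‖) ^ (-((s - 1) * r))) * (2 * I) :=
            lintegral_mono step
        _ = (∫⁻ ξ : E2',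
            ENNReal.ofReal ((1 + ‖ξ‖) ^ (-r) * (1 + ‖p.2 - ξ‖) ^ (-((s - 1) * r)))) * (2 * I) :=
            lintegral_mul_const' _ _ (ENNReal.mul_ne_top (by simp) hI)
        _ ≤ 2 * J * (2 * I) := by
            refine mul_le_mul_left ?_ _
            rw [hJdef]
            exact xi_bound hr0 hsrpos p.2
    · refine Measurable.aemeasurable ?_
      refine Measurable.fun_mul ?_ ?_
      · refine Measurable.ennreal_ofReal ?_
        refine Measurable.fun_mul ?_ ?_
        · exact measurable_rpow_of_pos (measurable_const.add measurable_snd.norm)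
            (fun q => by show (0:ℝ) < 1 + ‖q.2‖; positivity) _
        · exact measurable_rpow_of_pos
            (measurable_const.add (measurable_const.sub measurable_snd).norm)
            (fun q => by show (0:ℝ) < 1 + ‖p.2 - q.2‖; positivity) _
      · exact (measurable_rpow_of_pos hco (fun q => by positivity) _).ennreal_ofReal
  have main := conv_holder hconj
    (fun p : P2 => ENNReal.ofReal (1 + ‖p.2‖) * ENNReal.ofReal ((1 + |(|p.1|) - ‖p.2‖|) ^ b))
    (fun p : P2 => ENNReal.ofReal ((1 + ‖p.2‖) ^ (s - 1))) hw hv M hK F G hF hG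
    (fun p => mul_ne_zero (ENNReal.ofReal_pos.mpr (by positivity)).ne'
      (ENNReal.ofReal_pos.mpr (Real.rpow_pos_of_pos (by positivity) b)).ne')
    (fun p => ENNReal.mul_ne_top ENNReal.ofReal_ne_top ENNReal.ofReal_ne_top)
    (fun p => (ENNReal.ofReal_pos.mpr (Real.rpow_pos_of_pos (by positivity) _)).ne')
    (fun p => ENNReal.ofReal_ne_top)
  rw [ENNReal.coe_toNNReal hMr]
  exact main
end

section
/- Let 1<r≤2, b>1/r and s>2/r. Then there is a constant C such that for all measurable F, G : ℝ×ℝ² → [0,∞], ‖F∗G‖_{L^{r'}(ℝ×ℝ², dτ dξ)} ≤ C ‖⟨ξ⟩^s ⟨|τ|−|ξ|⟩^b F(τ,ξ)‖_{L^{r'}} ‖G‖_{L^{r'}}. (On the Fourier side this is the embedding X^r_{s,b} · L̂^r_{t,x} ↪ L̂^r_{t,x} in dimension n = 2.) -/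
open MeasureTheory ENNReal NNReal

namespace XsbAux

noncomputable section

abbrev E := EuclideanSpace ℝ (Fin 2)
abbrev P := ℝ × E

instance : (volume : Measure P).IsAddRightInvariant := by
  rw [show (volume : Measure P) = Measure.prod volume volume from rfl]
  infer_instance

end

end XsbAux

open XsbAux

/-- Fourier-side form of the embedding `X^r_{s,b} · L̂^r_{t,x} ↪ L̂^r_{t,x}` in dimension
`n = 2`: for `1 < r ≤ 2`, `b > 1/r` and `s > 2/r`,
`‖F∗G‖_{L^{r'}(ℝ×ℝ²)} ≤ C ‖⟨ξ⟩^s⟨|τ|−|ξ|⟩^b F‖_{L^{r'}} ‖G‖_{L^{r'}}`. -/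
theorem Xsb_mult_Lhat (r r' b s : ℝ) (hr : 1 < r) (hr2 : r ≤ 2)
    (hrr' : 1 / r + 1 / r' = 1) (hb : 1 / r < b) (hs : 2 / r < s) :
    ∃ C : ℝ≥0, ∀ F G : ℝ × EuclideanSpace ℝ (Fin 2) → ℝ≥0∞,
      Measurable F → Measurable G →
      (∫⁻ p : ℝ × EuclideanSpace ℝ (Fin 2),
          (∫⁻ q : ℝ × EuclideanSpace ℝ (Fin 2), F q * G (p - q)) ^ r') ^ (1 / r')
        ≤ C * (∫⁻ p : ℝ × EuclideanSpace ℝ (Fin 2),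
              (ENNReal.ofReal ((1 + ‖p.2‖) ^ s) *
                ENNReal.ofReal ((1 + |(|p.1|) - ‖p.2‖|) ^ b) * F p) ^ r') ^ (1 / r')
            * (∫⁻ p : ℝ × EuclideanSpace ℝ (Fin 2), (G p) ^ r') ^ (1 / r') := by
  have hr0 : (0:ℝ) < r := lt_trans zero_lt_one hr
  have hr'0 : (0:ℝ) < r' := by
    have h1 : 1 / r' = 1 - 1 / r := by linarith
    have h2 : (0:ℝ) < 1 / r' := by
      rw [h1]
      have : 1 / r < 1 := by rw [div_lt_one hr0]; exact hr
      linarith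
    exact one_div_pos.mp h2
  have conj : Real.HolderConjugate r r' := Real.holderConjugate_iff.mpr ⟨hr, by rw [← one_div, ← one_div]; exact hrr'⟩
  -- the weight
  set w : P → ℝ≥0∞ := fun p =>
    ENNReal.ofReal ((1 + ‖p.2‖) ^ s) * ENNReal.ofReal ((1 + |(|p.1|) - ‖p.2‖|) ^ b) with hw_def
  have hbase1 : ∀ p : P, (0:ℝ) < 1 + ‖p.2‖ := fun p => by positivity
  have hbase2 : ∀ p : P, (0:ℝ) < 1 + |(|p.1|) - ‖p.2‖| := fun p => by positivity
  have hw_ne0 : ∀ p, w p ≠ 0 := by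
    intro p
    simp only [hw_def, mul_ne_zero_iff, ne_eq, ENNReal.ofReal_eq_zero, not_le]
    exact ⟨Real.rpow_pos_of_pos (hbase1 p) _, Real.rpow_pos_of_pos (hbase2 p) _⟩
  have hw_ne_top : ∀ p, w p ≠ ∞ := fun p =>
    ENNReal.mul_ne_top ENNReal.ofReal_ne_top ENNReal.ofReal_ne_top
  have hw_meas : Measurable w := by
    apply Measurable.fun_mul
    · exact ((measurable_const.add measurable_snd.norm).pow measurable_const).ennreal_ofReal
    · exact ((measurable_const.add
        ((measurable_fst.abs.sub measurable_snd.norm).abs)).pow measurable_const).ennreal_ofReal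
  -- pointwise formula for (w p)⁻¹ ^ r
  have hw_inv : ∀ p : P, (w p)⁻¹ ^ r =
      ENNReal.ofReal ((1 + ‖p.2‖) ^ (-(s * r))) *
        ENNReal.ofReal ((1 + |(|p.1|) - ‖p.2‖|) ^ (-(b * r))) := by
    intro p
    have h1 : (0:ℝ) < (1 + ‖p.2‖) ^ s := Real.rpow_pos_of_pos (hbase1 p) _
    have h2 : (0:ℝ) < (1 + |(|p.1|) - ‖p.2‖|) ^ b := Real.rpow_pos_of_pos (hbase2 p) _
    simp only [hw_def]
    rw [ENNReal.mul_inv (Or.inl (by simp [h1])) (Or.inl ENNReal.ofReal_ne_top)]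
    rw [ENNReal.mul_rpow_of_nonneg _ _ hr0.le]
    rw [← ENNReal.ofReal_inv_of_pos h1, ← ENNReal.ofReal_inv_of_pos h2]
    rw [ENNReal.ofReal_rpow_of_pos (inv_pos.mpr h1),
      ENNReal.ofReal_rpow_of_pos (inv_pos.mpr h2)]
    congr 2
    · rw [← Real.rpow_neg (hbase1 p).le, ← Real.rpow_mul (hbase1 p).le, neg_mul]
    · rw [← Real.rpow_neg (hbase2 p).le, ← Real.rpow_mul (hbase2 p).le, neg_mul]
  -- finiteness of the weight integral
  have hA : (∫⁻ u : ℝ, ENNReal.ofReal ((1 + |u|) ^ (-(b * r)))) ≠ ∞ := by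
    have hbr : (1:ℝ) < b * r := by
      have := (div_lt_iff₀ hr0).mp hb; linarith
    have hint : Integrable (fun x : ℝ => (1 + ‖x‖) ^ (-(b * r))) := by
      apply integrable_one_add_norm; simpa using hbr
    have := hint.lintegral_lt_top
    simpa [Real.norm_eq_abs] using this.ne
  have hB : (∫⁻ ξ : E, ENNReal.ofReal ((1 + ‖ξ‖) ^ (-(s * r)))) ≠ ∞ := by
    have hsr : (2:ℝ) < s * r := by
      have := (div_lt_iff₀ hr0).mp hs; linarith
    have hint : Integrable (fun x : E => (1 + ‖x‖) ^ (-(s * r))) := by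
      apply integrable_one_add_norm; simpa [finrank_euclideanSpace] using hsr
    exact hint.lintegral_lt_top.ne
  set A : ℝ≥0∞ := ∫⁻ u : ℝ, ENNReal.ofReal ((1 + |u|) ^ (-(b * r))) with hA_def
  set B : ℝ≥0∞ := ∫⁻ ξ : E, ENNReal.ofReal ((1 + ‖ξ‖) ^ (-(s * r))) with hB_def
  have hKr : (∫⁻ p : P, (w p)⁻¹ ^ r) ≤ 2 * A * B := by
    have hmeas2 : Measurable fun z : ℝ × E =>
        ENNReal.ofReal ((1 + ‖z.2‖) ^ (-(s * r))) *
          ENNReal.ofReal ((1 + |(|z.1|) - ‖z.2‖|) ^ (-(b * r))) := by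
      apply Measurable.fun_mul
      · exact ((measurable_const.add measurable_snd.norm).pow measurable_const).ennreal_ofReal
      · exact ((measurable_const.add
          ((measurable_fst.abs.sub measurable_snd.norm).abs)).pow
            measurable_const).ennreal_ofReal
    calc (∫⁻ p : P, (w p)⁻¹ ^ r)
        = ∫⁻ p : P, ENNReal.ofReal ((1 + ‖p.2‖) ^ (-(s * r))) *
            ENNReal.ofReal ((1 + |(|p.1|) - ‖p.2‖|) ^ (-(b * r))) :=
          lintegral_congr fun p => hw_inv p
      _ = ∫⁻ ξ : E, ∫⁻ τ : ℝ, ENNReal.ofReal ((1 + ‖ξ‖) ^ (-(s * r))) *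
            ENNReal.ofReal ((1 + |(|τ|) - ‖ξ‖|) ^ (-(b * r))) := by
          rw [show (volume : Measure P) = Measure.prod volume volume from rfl]
          exact MeasureTheory.lintegral_prod_symm _ hmeas2.aemeasurable
      _ ≤ ∫⁻ ξ : E, ENNReal.ofReal ((1 + ‖ξ‖) ^ (-(s * r))) * (2 * A) := by
          apply lintegral_mono
          intro ξ
          dsimp only
          rw [lintegral_const_mul _ (show Measurable fun τ : ℝ =>
            ENNReal.ofReal ((1 + |(|τ|) - ‖ξ‖|) ^ (-(b * r))) from
            ((measurable_const.add
              ((measurable_id.abs.sub measurable_const).abs)).pow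
                measurable_const).ennreal_ofReal)]
          apply mul_le_mul_right
          calc (∫⁻ τ : ℝ, ENNReal.ofReal ((1 + |(|τ|) - ‖ξ‖|) ^ (-(b * r))))
              ≤ ∫⁻ τ : ℝ, (ENNReal.ofReal ((1 + |τ - ‖ξ‖|) ^ (-(b * r))) +
                  ENNReal.ofReal ((1 + |τ + ‖ξ‖|) ^ (-(b * r)))) := by
                apply lintegral_mono
                intro τ
                dsimp only
                rcases le_or_gt 0 τ with hτ | hτ
                · have h : |(|τ|) - ‖ξ‖| = |τ - ‖ξ‖| := by rw [abs_of_nonneg hτ]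
                  rw [h]; exact le_self_add
                · have h : |(|τ|) - ‖ξ‖| = |τ + ‖ξ‖| := by
                    rw [abs_of_neg hτ, show -τ - ‖ξ‖ = -(τ + ‖ξ‖) by ring, abs_neg]
                  rw [h]; exact le_add_self
            _ = A + A := by
                rw [lintegral_add_left (show Measurable fun τ : ℝ =>
                  ENNReal.ofReal ((1 + |τ - ‖ξ‖|) ^ (-(b * r))) from
                  ((measurable_const.add
                    ((measurable_id.sub measurable_const).abs)).pow
                      measurable_const).ennreal_ofReal)]
                congr 1
                · rw [hA_def]
                  exact lintegral_sub_right_eq_self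
                    (fun u => ENNReal.ofReal ((1 + |u|) ^ (-(b * r)))) ‖ξ‖
                · rw [hA_def]
                  exact lintegral_add_right_eq_self
                    (fun u => ENNReal.ofReal ((1 + |u|) ^ (-(b * r)))) ‖ξ‖
            _ = 2 * A := by rw [two_mul]
      _ = 2 * A * B := by
          rw [lintegral_mul_const _ (show Measurable fun ξ : E =>
            ENNReal.ofReal ((1 + ‖ξ‖) ^ (-(s * r))) from
            ((measurable_const.add measurable_norm).pow measurable_const).ennreal_ofReal)]
          ring
  set K : ℝ≥0∞ := (∫⁻ p : P, (w p)⁻¹ ^ r) ^ (1 / r) with hK_def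
  have hK_ne_top : K ≠ ∞ := by
    rw [hK_def]
    apply ENNReal.rpow_ne_top_of_nonneg (by positivity)
    exact ne_top_of_le_ne_top (ENNReal.mul_ne_top (ENNReal.mul_ne_top (by simp) hA) hB) hKr
  refine ⟨K.toNNReal, ?_⟩
  intro F G hF hG
  have hKcoe : (K.toNNReal : ℝ≥0∞) = K := ENNReal.coe_toNNReal hK_ne_top
  rw [hKcoe]
  set NF : ℝ≥0∞ := (∫⁻ p : P, (w p * F p) ^ r') ^ (1 / r') with hNF_def
  set M : ℝ≥0∞ := ∫⁻ p : P, (G p) ^ r' with hM_def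
  set I : ℝ≥0∞ := ∫⁻ q : P, F q with hI_def
  -- Hölder: I ≤ K * NF
  have hI_le : I ≤ K * NF := by
    have h : I = ∫⁻ q : P, (w q)⁻¹ * (w q * F q) := by
      apply lintegral_congr
      intro q
      rw [← mul_assoc, ENNReal.inv_mul_cancel (hw_ne0 q) (hw_ne_top q), one_mul]
    rw [h, hK_def, hNF_def]
    exact ENNReal.lintegral_mul_le_Lp_mul_Lq volume conj
      hw_meas.inv.aemeasurable (hw_meas.mul hF).aemeasurable
  -- Young: pointwise Hölder in q
  set X : P → ℝ≥0∞ := fun p => ∫⁻ q : P, F q * (G (p - q)) ^ r' with hX_def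
  have step1 : ∀ p : P, (∫⁻ q : P, F q * G (p - q)) ≤ I ^ (1 / r) * (X p) ^ (1 / r') := by
    intro p
    have hsplit : ∀ q : P, F q * G (p - q) =
        ((F q) ^ (1 / r)) * ((F q) ^ (1 / r') * G (p - q)) := by
      intro q
      rw [← mul_assoc, ← ENNReal.rpow_add_of_nonneg _ _ (by positivity) (by positivity), hrr',
        ENNReal.rpow_one]
    calc (∫⁻ q : P, F q * G (p - q))
        = ∫⁻ q : P, ((F q) ^ (1 / r)) * ((F q) ^ (1 / r') * G (p - q)) :=
          lintegral_congr hsplit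
      _ ≤ (∫⁻ q : P, ((F q) ^ (1 / r)) ^ r) ^ (1 / r) *
            (∫⁻ q : P, ((F q) ^ (1 / r') * G (p - q)) ^ r') ^ (1 / r') := by
          apply ENNReal.lintegral_mul_le_Lp_mul_Lq volume conj
          · exact (hF.pow measurable_const).aemeasurable
          · exact ((hF.pow measurable_const).mul
              (hG.comp (measurable_const.sub measurable_id))).aemeasurable
      _ = I ^ (1 / r) * (X p) ^ (1 / r') := by
          congr 2
          · apply lintegral_congr
            intro q
            rw [← ENNReal.rpow_mul, one_div_mul_cancel hr0.ne', ENNReal.rpow_one]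
          · apply lintegral_congr
            intro q
            rw [ENNReal.mul_rpow_of_nonneg _ _ (by positivity), ← ENNReal.rpow_mul,
              one_div_mul_cancel hr'0.ne', ENNReal.rpow_one]
  have step2 : ∀ p : P, (∫⁻ q : P, F q * G (p - q)) ^ r' ≤ I ^ ((1 / r) * r') * X p := by
    intro p
    calc (∫⁻ q : P, F q * G (p - q)) ^ r'
        ≤ (I ^ (1 / r) * (X p) ^ (1 / r')) ^ r' :=
          ENNReal.rpow_le_rpow (step1 p) (by positivity)
      _ = I ^ ((1 / r) * r') * X p := by
          rw [ENNReal.mul_rpow_of_nonneg _ _ (by positivity), ← ENNReal.rpow_mul,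
            ← ENNReal.rpow_mul, one_div_mul_cancel hr'0.ne', ENNReal.rpow_one]
  have step3 : (∫⁻ p : P, X p) = I * M := by
    have hmeasX : AEMeasurable (Function.uncurry fun (p q : P) => F q * (G (p - q)) ^ r')
        ((volume : Measure P).prod volume) := by
      apply AEMeasurable.mul
      · exact (hF.comp measurable_snd).aemeasurable
      · exact ((hG.comp (measurable_fst.sub measurable_snd)).pow
          measurable_const).aemeasurable
    calc (∫⁻ p : P, X p) = ∫⁻ q : P, ∫⁻ p : P, F q * (G (p - q)) ^ r' :=
          MeasureTheory.lintegral_lintegral_swap hmeasX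
      _ = ∫⁻ q : P, F q * ∫⁻ p : P, (G (p - q)) ^ r' := by
          apply lintegral_congr
          intro q
          rw [lintegral_const_mul _ (show Measurable fun p : P => (G (p - q)) ^ r' from
            (hG.comp (measurable_id.sub measurable_const)).pow measurable_const)]
      _ = ∫⁻ q : P, F q * M := by
          apply lintegral_congr
          intro q
          congr 1
          rw [hM_def]
          exact lintegral_sub_right_eq_self (fun p => (G p) ^ r') q
      _ = I * M := by rw [lintegral_mul_const _ hF]
  have hXmeas : Measurable X := by
    rw [hX_def]
    apply Measurable.lintegral_prod_right
    exact (hF.comp measurable_snd).mul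
      ((hG.comp (measurable_fst.sub measurable_snd)).pow measurable_const)
  have step4 : (∫⁻ p : P, (∫⁻ q : P, F q * G (p - q)) ^ r') ≤ I ^ ((1 / r) * r') * (I * M) := by
    calc (∫⁻ p : P, (∫⁻ q : P, F q * G (p - q)) ^ r')
        ≤ ∫⁻ p : P, I ^ ((1 / r) * r') * X p := lintegral_mono step2
      _ = I ^ ((1 / r) * r') * ∫⁻ p : P, X p := lintegral_const_mul _ hXmeas
      _ = I ^ ((1 / r) * r') * (I * M) := by rw [step3]
  -- final chain
  have final : (∫⁻ p : P, (∫⁻ q : P, F q * G (p - q)) ^ r') ^ (1 / r') ≤ I * M ^ (1 / r') := by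
    calc (∫⁻ p : P, (∫⁻ q : P, F q * G (p - q)) ^ r') ^ (1 / r')
        ≤ (I ^ ((1 / r) * r') * (I * M)) ^ (1 / r') :=
          ENNReal.rpow_le_rpow step4 (by positivity)
      _ = I ^ (1 / r) * (I ^ (1 / r') * M ^ (1 / r')) := by
          rw [ENNReal.mul_rpow_of_nonneg _ _ (by positivity),
            ENNReal.mul_rpow_of_nonneg _ _ (by positivity), ← ENNReal.rpow_mul,
            mul_assoc (1 / r), mul_one_div, div_self hr'0.ne', mul_one]
      _ = I * M ^ (1 / r') := by
          rw [← mul_assoc, ← ENNReal.rpow_add_of_nonneg _ _ (by positivity) (by positivity),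
            hrr', ENNReal.rpow_one]
  calc (∫⁻ p : P, (∫⁻ q : P, F q * G (p - q)) ^ r') ^ (1 / r')
      ≤ I * M ^ (1 / r') := final
    _ ≤ (K * NF) * M ^ (1 / r') := mul_le_mul_left hI_le _
    _ = K * NF * M ^ (1 / r') := rfl
end

section
/- Null structure of the Ward wave map equation: let n ≥ 1 and let J be a twice continuously differentiable map from an open subset U of ℝ³ (coordinates (t,x,y)) into the invertible n×n complex matrices. Then pointwise on U, J·[ ∂_t(J^{−1}∂_tJ) − ∂_x(J^{−1}∂_xJ) − ∂_y(J^{−1}∂_yJ) − (J^{−1}∂_tJ · J^{−1}∂_yJ − J^{−1}∂_yJ · J^{−1}∂_tJ) ] = □J + J·Q₀(J^{−1},J) + J·Q₀₂(J^{−1},J), where □J = ∂_t²J − ∂_x²J − ∂_y²J, Q₀(A,B) = ∂_tA·∂_tB − ∂_xA·∂_xB − ∂_yA·∂_yB, and Q₀₂(A,B) = ∂_tA·∂_yB − ∂_yA·∂_tB (all products are matrix products). In particular, J solves the Ward wave map equation ∂_t(J^{−1}J_t) − ∂_x(J^{−1}J_x) − ∂_y(J^{−1}J_y) − [J^{−1}J_t,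 J^{−1}J_y] = 0 if and only if □J + J·Q₀(J^{−1},J) + J·Q₀₂(J^{−1},J) = 0. -/
open Matrix

attribute [local instance] Matrix.normedAddCommGroup Matrix.normedSpace

/-- Partial derivative in the first (time) coordinate. -/
noncomputable def dt' {M : Type*} [NormedAddCommGroup M] [NormedSpace ℝ M]
    (J : ℝ × ℝ × ℝ → M) (p : ℝ × ℝ × ℝ) : M :=
  deriv (fun τ => J (τ, p.2.1, p.2.2)) p.1

/-- Partial derivative in the second (x) coordinate. -/
noncomputable def dx' {M : Type*} [NormedAddCommGroup M] [NormedSpace ℝ M]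
    (J : ℝ × ℝ × ℝ → M) (p : ℝ × ℝ × ℝ) : M :=
  deriv (fun τ => J (p.1, τ, p.2.2)) p.2.1

/-- Partial derivative in the third (y) coordinate. -/
noncomputable def dy' {M : Type*} [NormedAddCommGroup M] [NormedSpace ℝ M]
    (J : ℝ × ℝ × ℝ → M) (p : ℝ × ℝ × ℝ) : M :=
  deriv (fun τ => J (p.1, p.2.1, τ)) p.2.2

variable {n : ℕ}

section helpers
lemma hasDerivAt_matrix {f : ℝ → Matrix (Fin n) (Fin n) ℂ} {f' : Matrix (Fin n) (Fin n) ℂ} {t : ℝ} :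
    HasDerivAt f f' t ↔ ∀ i j, HasDerivAt (fun τ => f τ i j) (f' i j) t := by
  constructor
  · intro h i j
    exact hasDerivAt_pi.1 (hasDerivAt_pi.1 h i) j
  · intro h
    exact hasDerivAt_pi.2 fun i => hasDerivAt_pi.2 fun j => h i j

lemma differentiableAt_matrix {f : ℝ → Matrix (Fin n) (Fin n) ℂ} {t : ℝ} :
    DifferentiableAt ℝ f t ↔ ∀ i j, DifferentiableAt ℝ (fun τ => f τ i j) t := by
  constructor
  · intro h i j
    exact differentiableAt_pi.1 (differentiableAt_pi.1 h i) j
  · intro h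
    exact differentiableAt_pi.2 fun i => differentiableAt_pi.2 fun j => h i j

lemma HasDerivAt.matMul {f g : ℝ → Matrix (Fin n) (Fin n) ℂ} {f' g' : Matrix (Fin n) (Fin n) ℂ}
    {t : ℝ} (hf : HasDerivAt f f' t) (hg : HasDerivAt g g' t) :
    HasDerivAt (fun τ => f τ * g τ) (f' * g t + f t * g') t := by
  rw [hasDerivAt_matrix] at hf hg ⊢
  intro i j
  simp only [Matrix.mul_apply, Matrix.add_apply]
  have : ∀ k ∈ Finset.univ, HasDerivAt (fun τ => f τ i k * g τ k j)
      (f' i k * g t k j + f t i k * g' k j) t := fun k _ => (hf i k).mul (hg k j)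
  simpa [Finset.sum_add_distrib] using HasDerivAt.fun_sum this

lemma det_differentiableAt {g : ℝ → Matrix (Fin n) (Fin n) ℂ} {t : ℝ}
    (hg : DifferentiableAt ℝ g t) : DifferentiableAt ℝ (fun τ => (g τ).det) t := by
  simp only [Matrix.det_apply']
  refine DifferentiableAt.fun_sum fun σ _ => DifferentiableAt.const_mul ?_ _
  exact DifferentiableAt.fun_finsetProd fun i _ => differentiableAt_matrix.1 hg (σ i) i

lemma adjugate_differentiableAt {g : ℝ → Matrix (Fin n) (Fin n) ℂ} {t : ℝ}
    (hg : DifferentiableAt ℝ g t) : DifferentiableAt ℝ (fun τ => (g τ).adjugate) t := by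
  rw [differentiableAt_matrix]
  intro i j
  simp only [Matrix.adjugate_apply, Matrix.det_apply']
  refine DifferentiableAt.fun_sum fun σ _ => DifferentiableAt.const_mul ?_ _
  refine DifferentiableAt.fun_finsetProd fun k _ => ?_
  simp only [Matrix.updateRow_apply]
  by_cases h : σ k = j
  · simp only [h, if_true]
    exact differentiableAt_const _
  · simp only [h, if_false]
    exact differentiableAt_matrix.1 hg (σ k) k

lemma inv_differentiableAt {g : ℝ → Matrix (Fin n) (Fin n) ℂ} {t : ℝ}
    (hg : DifferentiableAt ℝ g t) (hu : IsUnit (g t)) :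
    DifferentiableAt ℝ (fun τ => (g τ)⁻¹) t := by
  have hdet : DifferentiableAt ℝ (fun τ => (g τ).det) t := det_differentiableAt hg
  have hne : (g t).det ≠ 0 := ((Matrix.isUnit_iff_isUnit_det _).1 hu).ne_zero
  simp only [Matrix.inv_def, Ring.inverse_eq_inv']
  exact DifferentiableAt.smul (hdet.inv hne) (adjugate_differentiableAt hg)

lemma HasDerivAt.matInv {g : ℝ → Matrix (Fin n) (Fin n) ℂ} {g' : Matrix (Fin n) (Fin n) ℂ} {t : ℝ}
    (hg : HasDerivAt g g' t) (hu : IsUnit (g t)) :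
    HasDerivAt (fun τ => (g τ)⁻¹) (-((g t)⁻¹ * g' * (g t)⁻¹)) t := by
  have hdet : (g t).det ≠ 0 := ((Matrix.isUnit_iff_isUnit_det _).1 hu).ne_zero
  have hinv : DifferentiableAt ℝ (fun τ => (g τ)⁻¹) t := inv_differentiableAt hg.differentiableAt hu
  set h' := _root_.deriv (fun τ => (g τ)⁻¹) t with hh'
  have hh : HasDerivAt (fun τ => (g τ)⁻¹) h' t := hinv.hasDerivAt
  have hunit : ∀ᶠ τ in nhds t, IsUnit (g τ) := by
    have hc : ContinuousAt (fun τ => (g τ).det) t :=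
      (det_differentiableAt hg.differentiableAt).continuousAt
    filter_upwards [hc.eventually_ne hdet] with τ hτ
    exact (Matrix.isUnit_iff_isUnit_det _).2 (isUnit_iff_ne_zero.2 hτ)
  have hprod : HasDerivAt (fun τ => g τ * (g τ)⁻¹) (g' * (g t)⁻¹ + g t * h') t := hg.matMul hh
  have hone : HasDerivAt (fun _ : ℝ => (1 : Matrix (Fin n) (Fin n) ℂ))
      (g' * (g t)⁻¹ + g t * h') t := by
    refine hprod.congr_of_eventuallyEq ?_
    filter_upwards [hunit] with τ hτ
    exact (Matrix.mul_nonsing_inv _ ((Matrix.isUnit_iff_isUnit_det _).1 hτ)).symm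
  have hzero : g' * (g t)⁻¹ + g t * h' = 0 := hone.unique (hasDerivAt_const _ _)
  have hK : (g t)⁻¹ * g t = 1 := Matrix.nonsing_inv_mul _ ((Matrix.isUnit_iff_isUnit_det _).1 hu)
  have : h' = -((g t)⁻¹ * g' * (g t)⁻¹) := by
    have h2 := congrArg (fun X => (g t)⁻¹ * X) hzero
    simp only [Matrix.mul_add, ← Matrix.mul_assoc, hK, Matrix.one_mul, Matrix.mul_zero] at h2
    linear_combination (norm := noncomm_ring) h2
  rwa [this] at hh
end helpers


lemma ward_key (U : Set (ℝ × ℝ × ℝ)) (hU : IsOpen U)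
    (J : ℝ × ℝ × ℝ → Matrix (Fin n) (Fin n) ℂ) (hJ : ContDiffOn ℝ 2 J U)
    (hJinv : ∀ p ∈ U, IsUnit (J p))
    (D : (ℝ × ℝ × ℝ → Matrix (Fin n) (Fin n) ℂ) → (ℝ × ℝ × ℝ) → Matrix (Fin n) (Fin n) ℂ)
    (v : ℝ × ℝ × ℝ) (L : (ℝ × ℝ × ℝ) → ℝ → (ℝ × ℝ × ℝ)) (π : (ℝ × ℝ × ℝ) → ℝ)
    (hD : ∀ g q, D g q = deriv (fun τ => g (L q τ)) (π q))
    (hLπ : ∀ q, L q (π q) = q)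
    (hLd : ∀ q, HasDerivAt (L q) v (π q))
    (p : ℝ × ℝ × ℝ) (hp : p ∈ U) :
    D J p = fderiv ℝ J p v ∧
    D (D J) p = fderiv ℝ (fun q => fderiv ℝ J q) p v v ∧
    D (fun q => (J q)⁻¹) p = -((J p)⁻¹ * fderiv ℝ J p v * (J p)⁻¹) ∧
    D (fun q => (J q)⁻¹ * D J q) p
      = -((J p)⁻¹ * fderiv ℝ J p v * (J p)⁻¹) * fderiv ℝ J p v
        + (J p)⁻¹ * fderiv ℝ (fun q => fderiv ℝ J q) p v v := by
  set F := fun q => fderiv ℝ J q with hF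
  have hJd : ∀ q ∈ U, DifferentiableAt ℝ J q := fun q hq =>
    (hJ.contDiffAt (hU.mem_nhds hq)).differentiableAt (by norm_num)
  letI : NormedAddCommGroup (ℝ × ℝ × ℝ →L[ℝ] Matrix (Fin n) (Fin n) ℂ) :=
    ContinuousLinearMap.toNormedAddCommGroup
  letI : NormedSpace ℝ (ℝ × ℝ × ℝ →L[ℝ] Matrix (Fin n) (Fin n) ℂ) :=
    ContinuousLinearMap.toNormedSpace
  have hFC : ContDiffOn ℝ 1 F U := hJ.fderiv_of_isOpen hU (by norm_num)
  have hFd : DifferentiableAt ℝ F p :=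
    (hFC.contDiffAt (hU.mem_nhds hp)).differentiableAt one_ne_zero
  -- first derivative at any q ∈ U
  have hDJ : ∀ q ∈ U, HasDerivAt (fun τ => J (L q τ)) (F q v) (π q) := fun q hq =>
    (hJd q hq).hasFDerivAt.comp_hasDerivAt_of_eq (π q) (hLd q) (hLπ q).symm
  have fact1 : ∀ q ∈ U, D J q = F q v := fun q hq => by
    rw [hD]; exact (hDJ q hq).deriv
  -- eventual membership along the curve through p
  have hev : ∀ᶠ τ in nhds (π p), L p τ ∈ U := by
    have : L p (π p) ∈ U := by rw [hLπ]; exact hp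
    exact (hLd p).continuousAt.preimage_mem_nhds (hU.mem_nhds this)
  -- derivative of τ ↦ F (L p τ) v
  have hFc : HasDerivAt (fun τ => F (L p τ)) (fderiv ℝ F p v) (π p) :=
    hFd.hasFDerivAt.comp_hasDerivAt_of_eq (π p) (hLd p) (hLπ p).symm
  have hFcv : HasDerivAt (fun τ => F (L p τ) v) (fderiv ℝ F p v v) (π p) := by
    have := hFc.clm_apply (hasDerivAt_const (π p) v)
    erw [(F (L p (π p))).map_zero, add_zero] at this
    exact this
  -- second derivative
  have hDJev : (fun τ => D J (L p τ)) =ᶠ[nhds (π p)] fun τ => F (L p τ) v := by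
    filter_upwards [hev] with τ hτ
    exact fact1 _ hτ
  have fact2 : D (D J) p = fderiv ℝ F p v v := by
    rw [hD]
    exact ((hFcv.congr_of_eventuallyEq hDJev)).deriv
  -- inverse
  have hJc : HasDerivAt (fun τ => J (L p τ)) (F p v) (π p) := hDJ p hp
  have huc : IsUnit (J (L p (π p))) := by rw [hLπ]; exact hJinv p hp
  have hinvc : HasDerivAt (fun τ => (J (L p τ))⁻¹)
      (-((J p)⁻¹ * F p v * (J p)⁻¹)) (π p) := by
    have := hJc.matInv huc
    rw [hLπ] at this
    exact this
  have fact3 : D (fun q => (J q)⁻¹) p = -((J p)⁻¹ * F p v * (J p)⁻¹) := by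
    rw [hD]; exact hinvc.deriv
  refine ⟨fact1 p hp, fact2, fact3, ?_⟩
  -- product
  have hprod : HasDerivAt (fun τ => (J (L p τ))⁻¹ * (F (L p τ) v))
      (-((J p)⁻¹ * F p v * (J p)⁻¹) * (F (L p (π p)) v) + (J (L p (π p)))⁻¹ * fderiv ℝ F p v v)
      (π p) := hinvc.matMul hFcv
  rw [hLπ] at hprod
  have hev2 : (fun τ => (fun q => (J q)⁻¹ * D J q) (L p τ))
      =ᶠ[nhds (π p)] fun τ => (J (L p τ))⁻¹ * (F (L p τ) v) := by
    filter_upwards [hev] with τ hτ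
    simp only [fact1 _ hτ]
  rw [hD]
  exact ((hprod.congr_of_eventuallyEq hev2)).deriv


lemma ward_alg {R : Type*} [Ring R] (Jp K At Ax Ay Bt Bx By : R) (h1 : Jp * K = 1) :
    Jp * ((-(K * At * K) * At + K * Bt) - (-(K * Ax * K) * Ax + K * Bx)
        - (-(K * Ay * K) * Ay + K * By) - (K * At * (K * Ay) - K * Ay * (K * At)))
    = (Bt - Bx - By)
      + Jp * (-(K * At * K) * At - -(K * Ax * K) * Ax - -(K * Ay * K) * Ay)
      + Jp * (-(K * At * K) * Ay - -(K * Ay * K) * At) := by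
  simp only [mul_sub, mul_add, mul_neg, ← mul_assoc, h1, one_mul]
  noncomm_ring


/-- Null structure of the Ward wave map equation: for a `C²` map `J` on an open set
`U ⊆ ℝ³` with invertible matrix values, pointwise on `U`,
`J·[∂_t(J⁻¹∂_tJ) − ∂_x(J⁻¹∂_xJ) − ∂_y(J⁻¹∂_yJ) − [J⁻¹∂_tJ, J⁻¹∂_yJ]]
  = □J + J·Q₀(J⁻¹,J) + J·Q₀₂(J⁻¹,J)`,
and consequently `J` solves the Ward wave map equation on `U` iff
`□J + J·Q₀(J⁻¹,J) + J·Q₀₂(J⁻¹,J) = 0` on `U`. -/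
theorem ward_null_structure (n : ℕ) (hn : 1 ≤ n) (U : Set (ℝ × ℝ × ℝ)) (hU : IsOpen U)
    (J : ℝ × ℝ × ℝ → Matrix (Fin n) (Fin n) ℂ) (hJ : ContDiffOn ℝ 2 J U)
    (hJinv : ∀ p ∈ U, IsUnit (J p)) :
    (∀ p ∈ U,
      J p * (dt' (fun q => (J q)⁻¹ * dt' J q) p - dx' (fun q => (J q)⁻¹ * dx' J q) p
          - dy' (fun q => (J q)⁻¹ * dy' J q) p
          - ((J p)⁻¹ * dt' J p * ((J p)⁻¹ * dy' J p)
              - (J p)⁻¹ * dy' J p * ((J p)⁻¹ * dt' J p)))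
        = (dt' (dt' J) p - dx' (dx' J) p - dy' (dy' J) p)
          + J p * (dt' (fun q => (J q)⁻¹) p * dt' J p
              - dx' (fun q => (J q)⁻¹) p * dx' J p
              - dy' (fun q => (J q)⁻¹) p * dy' J p)
          + J p * (dt' (fun q => (J q)⁻¹) p * dy' J p
              - dy' (fun q => (J q)⁻¹) p * dt' J p))
    ∧ ((∀ p ∈ U,
          dt' (fun q => (J q)⁻¹ * dt' J q) p - dx' (fun q => (J q)⁻¹ * dx' J q) p
            - dy' (fun q => (J q)⁻¹ * dy' J q) p
            - ((J p)⁻¹ * dt' J p * ((J p)⁻¹ * dy' J p)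
                - (J p)⁻¹ * dy' J p * ((J p)⁻¹ * dt' J p)) = 0)
        ↔ (∀ p ∈ U,
          (dt' (dt' J) p - dx' (dx' J) p - dy' (dy' J) p)
            + J p * (dt' (fun q => (J q)⁻¹) p * dt' J p
                - dx' (fun q => (J q)⁻¹) p * dx' J p
                - dy' (fun q => (J q)⁻¹) p * dy' J p)
            + J p * (dt' (fun q => (J q)⁻¹) p * dy' J p
                - dy' (fun q => (J q)⁻¹) p * dt' J p) = 0)) := by
  have main : ∀ p ∈ U,
      J p * (dt' (fun q => (J q)⁻¹ * dt' J q) p - dx' (fun q => (J q)⁻¹ * dx' J q) p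
          - dy' (fun q => (J q)⁻¹ * dy' J q) p
          - ((J p)⁻¹ * dt' J p * ((J p)⁻¹ * dy' J p)
              - (J p)⁻¹ * dy' J p * ((J p)⁻¹ * dt' J p)))
        = (dt' (dt' J) p - dx' (dx' J) p - dy' (dy' J) p)
          + J p * (dt' (fun q => (J q)⁻¹) p * dt' J p
              - dx' (fun q => (J q)⁻¹) p * dx' J p
              - dy' (fun q => (J q)⁻¹) p * dy' J p)
          + J p * (dt' (fun q => (J q)⁻¹) p * dy' J p
              - dy' (fun q => (J q)⁻¹) p * dt' J p) := by
    intro p hp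
    obtain ⟨t1, t2, t3, t4⟩ := ward_key U hU J hJ hJinv dt' ((1:ℝ), (0:ℝ), (0:ℝ))
      (fun q τ => (τ, q.2.1, q.2.2)) (fun q => q.1) (fun g q => rfl)
      (fun q => by simp) (fun q => (hasDerivAt_id q.1).prodMk (hasDerivAt_const _ _)) p hp
    obtain ⟨x1, x2, x3, x4⟩ := ward_key U hU J hJ hJinv dx' ((0:ℝ), (1:ℝ), (0:ℝ))
      (fun q τ => (q.1, τ, q.2.2)) (fun q => q.2.1) (fun g q => rfl)
      (fun q => by simp)
      (fun q => (hasDerivAt_const _ _).prodMk ((hasDerivAt_id _).prodMk (hasDerivAt_const _ _))) p hp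
    obtain ⟨y1, y2, y3, y4⟩ := ward_key U hU J hJ hJinv dy' ((0:ℝ), (0:ℝ), (1:ℝ))
      (fun q τ => (q.1, q.2.1, τ)) (fun q => q.2.2) (fun g q => rfl)
      (fun q => by simp)
      (fun q => (hasDerivAt_const _ _).prodMk ((hasDerivAt_const _ _).prodMk (hasDerivAt_id _))) p hp
    rw [t1, t2, t3, t4, x1, x2, x3, x4, y1, y2, y3, y4]
    exact ward_alg (J p) ((J p)⁻¹) _ _ _ _ _ _
      (Matrix.mul_nonsing_inv _ ((Matrix.isUnit_iff_isUnit_det _).1 (hJinv p hp)))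
  refine ⟨main, ?_, ?_⟩
  · intro h p hp
    rw [← main p hp, h p hp, mul_zero]
  · intro h p hp
    have hK : (J p)⁻¹ * J p = 1 :=
      Matrix.nonsing_inv_mul _ ((Matrix.isUnit_iff_isUnit_det _).1 (hJinv p hp))
    have h0 : J p * (dt' (fun q => (J q)⁻¹ * dt' J q) p - dx' (fun q => (J q)⁻¹ * dx' J q) p
        - dy' (fun q => (J q)⁻¹ * dy' J q) p
        - ((J p)⁻¹ * dt' J p * ((J p)⁻¹ * dy' J p)
            - (J p)⁻¹ * dy' J p * ((J p)⁻¹ * dt' J p))) = 0 := by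
      rw [main p hp]; exact h p hp
    calc _ = (J p)⁻¹ * (J p * (dt' (fun q => (J q)⁻¹ * dt' J q) p
          - dx' (fun q => (J q)⁻¹ * dx' J q) p - dy' (fun q => (J q)⁻¹ * dy' J q) p
          - ((J p)⁻¹ * dt' J p * ((J p)⁻¹ * dy' J p)
              - (J p)⁻¹ * dy' J p * ((J p)⁻¹ * dt' J p)))) := by
          conv_rhs => rw [← Matrix.mul_assoc, hK, Matrix.one_mul]
      _ = 0 := by rw [h0, Matrix.mul_zero]
end

section
/- Elliptic bound for the Q₁₂ symbol: for all nonzero η, ζ ∈ ℝ², writing ξ = η + ζ, one has |η∧ζ| ≤ 2·|ξ|^{1/2}·(|η| + |ζ| − |ξ|)^{1/2}·|η|^{1/2}·|ζ|^{1/2}. Equivalently, |η∧ζ|/(|η||ζ|) ≤ 2·|ξ|^{1/2}(|η|+|ζ|−|ξ|)^{1/2}/(|η|^{1/2}|ζ|^{1/2}). (By the triangle inequality |ξ| ≤ |η| + |ζ|, so the right-hand side is well defined.) -/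
private lemma q12_aux (s c d : ℝ) (h0 : 0 ≤ d) (h1 : d ≤ c) (h2 : c ≤ s) :
    (s + c) * (c ^ 2 - d ^ 2) ≤ 4 * c * (s ^ 2 - d ^ 2) := by
  nlinarith [mul_nonneg (sub_nonneg.2 h2) (sub_nonneg.2 h1),
    mul_nonneg (mul_nonneg (sub_nonneg.2 h2) (sub_nonneg.2 h1)) h0,
    mul_nonneg (sub_nonneg.2 (h1.trans h2)) (sub_nonneg.2 h1),
    mul_nonneg h0 (sub_nonneg.2 h1), mul_nonneg h0 (sub_nonneg.2 h2)]

/-- Elliptic bound for the `Q₁₂` symbol: for nonzero `η, ζ ∈ ℝ²` and `ξ = η + ζ`,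
`|η∧ζ| ≤ 2·|ξ|^{1/2}(|η|+|ζ|−|ξ|)^{1/2}|η|^{1/2}|ζ|^{1/2}`, equivalently
`|η∧ζ|/(|η||ζ|) ≤ 2·|ξ|^{1/2}(|η|+|ζ|−|ξ|)^{1/2}/(|η|^{1/2}|ζ|^{1/2})`. -/
theorem Q12_symbol_elliptic_bound (η ζ : EuclideanSpace ℝ (Fin 2))
    (hη : η ≠ 0) (hζ : ζ ≠ 0) :
    |η 0 * ζ 1 - η 1 * ζ 0|
        ≤ 2 * Real.sqrt ‖η + ζ‖ * Real.sqrt (‖η‖ + ‖ζ‖ - ‖η + ζ‖) *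
            Real.sqrt ‖η‖ * Real.sqrt ‖ζ‖
    ∧ |η 0 * ζ 1 - η 1 * ζ 0| / (‖η‖ * ‖ζ‖)
        ≤ 2 * Real.sqrt ‖η + ζ‖ * Real.sqrt (‖η‖ + ‖ζ‖ - ‖η + ζ‖) /
            (Real.sqrt ‖η‖ * Real.sqrt ‖ζ‖) := by
  set a := ‖η‖ with ha'
  set b := ‖ζ‖ with hb'
  set c := ‖η + ζ‖ with hc'
  set w := η 0 * ζ 1 - η 1 * ζ 0 with hw'
  set p := η 0 * ζ 0 + η 1 * ζ 1 with hp'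
  have ha : 0 < a := norm_pos_iff.2 hη
  have hb : 0 < b := norm_pos_iff.2 hζ
  have hc : 0 ≤ c := norm_nonneg _
  have htri : c ≤ a + b := norm_add_le η ζ
  have hs : 0 ≤ a + b - c := sub_nonneg.2 htri
  have hd : |a - b| ≤ c := by
    have := abs_norm_sub_norm_le η (-ζ)
    simpa [sub_neg_eq_add] using this
  have ha2 : a ^ 2 = η 0 ^ 2 + η 1 ^ 2 := by
    rw [ha']
    simp [EuclideanSpace.norm_eq, Fin.sum_univ_two, sq_abs]
    rw [Real.sq_sqrt (by positivity)]
  have hb2 : b ^ 2 = ζ 0 ^ 2 + ζ 1 ^ 2 := by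
    rw [hb']
    simp [EuclideanSpace.norm_eq, Fin.sum_univ_two, sq_abs]
    rw [Real.sq_sqrt (by positivity)]
  have hc2 : c ^ 2 = (η 0 + ζ 0) ^ 2 + (η 1 + ζ 1) ^ 2 := by
    rw [hc']
    simp [EuclideanSpace.norm_eq, Fin.sum_univ_two, sq_abs]
    rw [Real.sq_sqrt (by positivity)]
  have hX : c ^ 2 = a ^ 2 + b ^ 2 + 2 * p := by
    rw [ha2, hb2, hc2, hp']; ring
  have hab2 : (a * b) ^ 2 = (η 0 ^ 2 + η 1 ^ 2) * (ζ 0 ^ 2 + ζ 1 ^ 2) := by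
    rw [mul_pow, ha2, hb2]
  -- key quadratic bound
  have key : w ^ 2 ≤ 4 * c * (a + b - c) * a * b := by
    have haux := q12_aux (a + b) c (|a - b|) (abs_nonneg _) hd htri
    rw [sq_abs] at haux
    have hmul := mul_le_mul_of_nonneg_left haux hs
    have hlag : 4 * w ^ 2 = ((a + b) ^ 2 - c ^ 2) * (c ^ 2 - (a - b) ^ 2) := by
      have step1 : ((a + b) ^ 2 - c ^ 2) * (c ^ 2 - (a - b) ^ 2)
          = 4 * (a * b) ^ 2 - 4 * p ^ 2 := by rw [hX]; ring
      rw [step1, hab2, hw', hp']; ring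
    have e1 : ((a + b) ^ 2 - c ^ 2) * (c ^ 2 - (a - b) ^ 2)
        = (a + b - c) * ((a + b + c) * (c ^ 2 - (a - b) ^ 2)) := by ring
    have e2 : (a + b - c) * (4 * c * ((a + b) ^ 2 - (a - b) ^ 2))
        = 4 * (4 * c * (a + b - c) * a * b) := by ring
    linarith [hmul, hlag, e1, e2]
  set R := 2 * Real.sqrt c * Real.sqrt (a + b - c) * Real.sqrt a * Real.sqrt b with hR'
  have hRnn : 0 ≤ R := by positivity
  have hR2 : R ^ 2 = 4 * c * (a + b - c) * a * b := by
    have e : R ^ 2 = 4 * (Real.sqrt c ^ 2) * (Real.sqrt (a + b - c) ^ 2)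
        * (Real.sqrt a ^ 2) * (Real.sqrt b ^ 2) := by rw [hR']; ring
    rw [e, Real.sq_sqrt hc, Real.sq_sqrt hs, Real.sq_sqrt ha.le, Real.sq_sqrt hb.le]
  have h1 : |w| ≤ R := by
    have hkey : w ^ 2 ≤ R ^ 2 := by rw [hR2]; exact key
    have := Real.sqrt_le_sqrt hkey
    rwa [Real.sqrt_sq_eq_abs, Real.sqrt_sq hRnn] at this
  refine ⟨h1, ?_⟩
  have hsa : (0 : ℝ) < Real.sqrt a := Real.sqrt_pos.2 ha
  have hsb : (0 : ℝ) < Real.sqrt b := Real.sqrt_pos.2 hb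
  have hRdiv : R / (a * b) = 2 * Real.sqrt c * Real.sqrt (a + b - c)
      / (Real.sqrt a * Real.sqrt b) := by
    rw [div_eq_div_iff (by positivity) (by positivity)]
    calc R * (Real.sqrt a * Real.sqrt b)
        = 2 * Real.sqrt c * Real.sqrt (a + b - c)
            * ((Real.sqrt a * Real.sqrt a) * (Real.sqrt b * Real.sqrt b)) := by
          rw [hR']; ring
      _ = 2 * Real.sqrt c * Real.sqrt (a + b - c) * (a * b) := by
          rw [Real.mul_self_sqrt ha.le, Real.mul_self_sqrt hb.le]
  rw [← hRdiv]
  gcongr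
end

section
/- Hyperbolic bound for the Q₁₂ symbol: for all nonzero η, ζ ∈ ℝ², writing ξ = η + ζ, one has |η∧ζ| ≤ 2·|ξ|^{1/2}·(|ξ| − ||η| − |ζ||)^{1/2}·|η|^{1/2}·|ζ|^{1/2}. Equivalently, |η∧ζ|/(|η||ζ|) ≤ 2·|ξ|^{1/2}(|ξ| − ||η|−|ζ||)^{1/2}/(|η|^{1/2}|ζ|^{1/2}). (By the triangle inequality ||η| − |ζ|| ≤ |ξ|, so the right-hand side is well defined.) -/
/-- Hyperbolic bound for the `Q₁₂` symbol: for nonzero `η, ζ ∈ ℝ²` and `ξ = η + ζ`,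
`|η∧ζ| ≤ 2·|ξ|^{1/2}(|ξ| − ||η|−|ζ||)^{1/2}|η|^{1/2}|ζ|^{1/2}`, equivalently
`|η∧ζ|/(|η||ζ|) ≤ 2·|ξ|^{1/2}(|ξ| − ||η|−|ζ||)^{1/2}/(|η|^{1/2}|ζ|^{1/2})`. -/
theorem Q12_symbol_hyperbolic_bound (η ζ : EuclideanSpace ℝ (Fin 2))
    (hη : η ≠ 0) (hζ : ζ ≠ 0) :
    |η 0 * ζ 1 - η 1 * ζ 0|
        ≤ 2 * Real.sqrt ‖η + ζ‖ * Real.sqrt (‖η + ζ‖ - |‖η‖ - ‖ζ‖|) *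
            Real.sqrt ‖η‖ * Real.sqrt ‖ζ‖
    ∧ |η 0 * ζ 1 - η 1 * ζ 0| / (‖η‖ * ‖ζ‖)
        ≤ 2 * Real.sqrt ‖η + ζ‖ * Real.sqrt (‖η + ζ‖ - |‖η‖ - ‖ζ‖|) /
            (Real.sqrt ‖η‖ * Real.sqrt ‖ζ‖) := by
  set a := ‖η‖ with ha_def
  set b := ‖ζ‖ with hb_def
  set c := ‖η + ζ‖ with hc_def
  set d := |a - b| with hd_def
  set W := η 0 * ζ 1 - η 1 * ζ 0 with hW_def
  have ha : 0 < a := norm_pos_iff.mpr hη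
  have hb : 0 < b := norm_pos_iff.mpr hζ
  have hd0 : 0 ≤ d := abs_nonneg _
  have hd2 : d ^ 2 = (a - b) ^ 2 := sq_abs _
  have hdc : d ≤ c := by
    have := abs_norm_sub_norm_le η (-ζ)
    simpa [sub_neg_eq_add] using this
  have hcab : c ≤ a + b := norm_add_le η ζ
  have hc0 : 0 ≤ c := norm_nonneg _
  -- inner product and norms in coordinates
  have ht : (inner ℝ η ζ : ℝ) = η 0 * ζ 0 + η 1 * ζ 1 := by
    simp [PiLp.inner_apply, Fin.sum_univ_two, RCLike.inner_apply]; ring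
  have ha2 : a ^ 2 = η 0 ^ 2 + η 1 ^ 2 := by
    rw [ha_def, ← real_inner_self_eq_norm_sq]
    simp only [PiLp.inner_apply, Fin.sum_univ_two, RCLike.inner_apply, conj_trivial]; ring
  have hb2 : b ^ 2 = ζ 0 ^ 2 + ζ 1 ^ 2 := by
    rw [hb_def, ← real_inner_self_eq_norm_sq]
    simp only [PiLp.inner_apply, Fin.sum_univ_two, RCLike.inner_apply, conj_trivial]; ring
  have hc2 : c ^ 2 = a ^ 2 + 2 * (inner ℝ η ζ : ℝ) + b ^ 2 := by
    rw [hc_def, ha_def, hb_def]; exact norm_add_sq_real η ζ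
  -- Lagrange identity
  have hW2 : W ^ 2 = a ^ 2 * b ^ 2 - (inner ℝ η ζ : ℝ) ^ 2 := by
    rw [ha2, hb2, ht, hW_def]; ring
  set t := (inner ℝ η ζ : ℝ) with ht_def
  -- key real inequality
  have key : W ^ 2 ≤ 4 * (a * b * (c * (c - d))) := by
    rw [hW2]
    nlinarith [mul_nonneg (sub_nonneg.2 hdc) (sub_nonneg.2 hcab),
      mul_nonneg (sub_nonneg.2 hdc) hd0,
      mul_nonneg (mul_nonneg (sub_nonneg.2 hdc) hd0) (add_pos ha hb).le,
      mul_nonneg (sub_nonneg.2 hdc) (mul_nonneg (sub_nonneg.2 hcab) (add_pos ha hb).le),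
      mul_nonneg (mul_nonneg (sub_nonneg.2 hdc) (sub_nonneg.2 hcab)) (sub_nonneg.2 hcab),
      mul_pos ha hb, sq_nonneg (a - b), sq_nonneg (c - d), sq_nonneg (a + b - c)]
  set R := 2 * Real.sqrt c * Real.sqrt (c - d) * Real.sqrt a * Real.sqrt b with hR_def
  have hR0 : 0 ≤ R := by positivity
  have hR2 : R ^ 2 = 4 * (a * b * (c * (c - d))) := by
    have h1 : Real.sqrt c ^ 2 = c := Real.sq_sqrt hc0
    have h2 : Real.sqrt (c - d) ^ 2 = c - d := Real.sq_sqrt (sub_nonneg.2 hdc)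
    have h3 : Real.sqrt a ^ 2 = a := Real.sq_sqrt ha.le
    have h4 : Real.sqrt b ^ 2 = b := Real.sq_sqrt hb.le
    rw [hR_def]
    have he : (2 * Real.sqrt c * Real.sqrt (c - d) * Real.sqrt a * Real.sqrt b) ^ 2
        = 4 * (Real.sqrt c ^ 2 * (Real.sqrt (c - d) ^ 2 *
            (Real.sqrt a ^ 2 * Real.sqrt b ^ 2))) := by ring
    rw [he, h1, h2, h3, h4]; ring
  have part1 : |W| ≤ R := by
    have h := Real.sqrt_le_sqrt (by rw [← hR2] at key; exact key : W ^ 2 ≤ R ^ 2)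
    rwa [Real.sqrt_sq_eq_abs, Real.sqrt_sq hR0] at h
  refine ⟨part1, ?_⟩
  rw [div_le_div_iff₀ (by positivity) (by positivity)]
  have hsa : Real.sqrt a * Real.sqrt a = a := Real.mul_self_sqrt ha.le
  have hsb : Real.sqrt b * Real.sqrt b = b := Real.mul_self_sqrt hb.le
  calc |W| * (Real.sqrt a * Real.sqrt b)
      ≤ R * (Real.sqrt a * Real.sqrt b) :=
        mul_le_mul_of_nonneg_right part1 (by positivity)
    _ = 2 * Real.sqrt c * Real.sqrt (c - d) * ((Real.sqrt a * Real.sqrt a) *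
          (Real.sqrt b * Real.sqrt b)) := by rw [hR_def]; ring
    _ = 2 * Real.sqrt c * Real.sqrt (c - d) * (a * b) := by rw [hsa, hsb]
end

section
/- Two-sided elliptic bound for the Q₀ⱼ symbols: for all nonzero η, ζ ∈ ℝ², writing ξ = η + ζ, one has (|η|+|ζ|)^{1/2}·(|η|+|ζ|−|ξ|)^{1/2}·|η|^{1/2}·|ζ|^{1/2} ≤ | |η|ζ − |ζ|η | ≤ √2·(|η|+|ζ|)^{1/2}·(|η|+|ζ|−|ξ|)^{1/2}·|η|^{1/2}·|ζ|^{1/2}, where | |η|ζ − |ζ|η | is the Euclidean norm of the vector |η|ζ − |ζ|η ∈ ℝ². -/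
/-- Two-sided elliptic bound for the `Q₀ⱼ` symbols: for nonzero `η, ζ ∈ ℝ²` and
`ξ = η + ζ`,
`(|η|+|ζ|)^{1/2}(|η|+|ζ|−|ξ|)^{1/2}|η|^{1/2}|ζ|^{1/2} ≤ | |η|ζ − |ζ|η |
  ≤ √2·(|η|+|ζ|)^{1/2}(|η|+|ζ|−|ξ|)^{1/2}|η|^{1/2}|ζ|^{1/2}`. -/
theorem Q0j_symbol_elliptic_bound (η ζ : EuclideanSpace ℝ (Fin 2))
    (hη : η ≠ 0) (hζ : ζ ≠ 0) :
    Real.sqrt (‖η‖ + ‖ζ‖) * Real.sqrt (‖η‖ + ‖ζ‖ - ‖η + ζ‖) *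
        Real.sqrt ‖η‖ * Real.sqrt ‖ζ‖
      ≤ ‖‖η‖ • ζ - ‖ζ‖ • η‖
    ∧ ‖‖η‖ • ζ - ‖ζ‖ • η‖
      ≤ Real.sqrt 2 * (Real.sqrt (‖η‖ + ‖ζ‖) * Real.sqrt (‖η‖ + ‖ζ‖ - ‖η + ζ‖) *
          Real.sqrt ‖η‖ * Real.sqrt ‖ζ‖) := by
  set a := ‖η‖ with ha
  set b := ‖ζ‖ with hb
  set s := ‖η + ζ‖ with hs
  have ha0 : 0 ≤ a := norm_nonneg _
  have hb0 : 0 ≤ b := norm_nonneg _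
  have hs0 : 0 ≤ s := norm_nonneg _
  have hD0 : 0 ≤ a + b - s := by
    have := norm_add_le η ζ
    linarith
  set t := (inner ℝ η ζ : ℝ) with ht
  have hsq : s ^ 2 = a ^ 2 + 2 * t + b ^ 2 := by
    rw [hs, ha, hb, ht, @norm_add_sq_real]
  have hsym : ‖a • ζ - b • η‖ ^ 2 = a * b * ((a + b - s) * (a + b + s)) := by
    have h1 : ‖a • ζ - b • η‖ ^ 2
        = ‖a • ζ‖ ^ 2 - 2 * (inner ℝ (a • ζ) (b • η) : ℝ) + ‖b • η‖ ^ 2 := by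
      rw [@norm_sub_sq_real]
    rw [h1, norm_smul, norm_smul, real_inner_smul_left, real_inner_smul_right]
    rw [Real.norm_eq_abs, Real.norm_eq_abs, abs_of_nonneg ha0, abs_of_nonneg hb0]
    rw [real_inner_comm η ζ]
    linear_combination (a * b) * hsq
  have hsymsqrt : ‖a • ζ - b • η‖
      = Real.sqrt (a * b * ((a + b - s) * (a + b + s))) := by
    rw [← hsym, Real.sqrt_sq (norm_nonneg _)]
  have hL : Real.sqrt (a + b) * Real.sqrt (a + b - s) * Real.sqrt a * Real.sqrt b
      = Real.sqrt ((a + b) * (a + b - s) * a * b) := by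
    have hab : (0:ℝ) ≤ a + b := by linarith
    rw [Real.sqrt_mul (mul_nonneg (mul_nonneg hab hD0) ha0),
      Real.sqrt_mul (mul_nonneg hab hD0), Real.sqrt_mul hab]
  constructor
  · rw [hsymsqrt, hL]
    apply Real.sqrt_le_sqrt
    nlinarith [mul_nonneg (mul_nonneg (mul_nonneg ha0 hb0) hD0) hs0]
  · rw [hsymsqrt, hL, ← Real.sqrt_mul (by norm_num : (0:ℝ) ≤ 2)]
    apply Real.sqrt_le_sqrt
    nlinarith [mul_nonneg (mul_nonneg (mul_nonneg ha0 hb0) hD0) hD0]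
end
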